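/- arXiv:2206.07567 — 8 statements merged into one kernel-verified Lean document; each statement's English description precedes it below -/
import Mathlib

section
/- Let d ≥ 1, let S ⊆ ℝ^d be a nonempty finite set, let Q be the convex hull of S, and let D be the diameter of Q. Let 0 < α ≤ 1 and 0 < β ≤ 1. Suppose p ∈ Q is α-centered, i.e., there exists v ∈ ℝ^d with ‖v‖ = α·D/2 such that the segment [p − v, p + v] is contained in Q. Let p' be any point of the scaled polytope Q(p, β) = {p + (1−β)·(q − p) : q ∈ Q}. Then p' is (α·β)-centered in Q: there exists w ∈ ℝ^d with ‖w‖ ≥ α·β·D/2 such that the segment [p' − w, p' + w] is contained in Q. -/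
/-- Every point of the β-scaled polytope around an α-centered point of a
convex polytope Q is (α·β)-centered in Q. -/
theorem alpha_beta_contracting_is_lambda_contracting
    (d : ℕ) (hd : 1 ≤ d)
    (S : Set (EuclideanSpace ℝ (Fin d))) (hSfin : S.Finite) (hSne : S.Nonempty)
    (α β : ℝ) (hα0 : 0 < α) (hα1 : α ≤ 1) (hβ0 : 0 < β) (hβ1 : β ≤ 1)
    (p : EuclideanSpace ℝ (Fin d)) (hp : p ∈ convexHull ℝ S)
    (v : EuclideanSpace ℝ (Fin d))
    (hv : ‖v‖ = α * Metric.diam (convexHull ℝ S) / 2)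
    (hseg : segment ℝ (p - v) (p + v) ⊆ convexHull ℝ S)
    (p' : EuclideanSpace ℝ (Fin d))
    (hp' : ∃ q ∈ convexHull ℝ S, p' = p + (1 - β) • (q - p)) :
    ∃ w : EuclideanSpace ℝ (Fin d),
      α * β * Metric.diam (convexHull ℝ S) / 2 ≤ ‖w‖ ∧
      segment ℝ (p' - w) (p' + w) ⊆ convexHull ℝ S := by
  obtain ⟨q, hq, hpq⟩ := hp'
  refine ⟨β • v, ?_, ?_⟩
  · rw [norm_smul, hv, Real.norm_eq_abs, abs_of_pos hβ0]
    apply le_of_eq; ring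
  · intro x hx
    obtain ⟨a, b, ha, hb, hab, hx⟩ := hx
    have hy : a • (p - v) + b • (p + v) ∈ convexHull ℝ S :=
      hseg ⟨a, b, ha, hb, hab, rfl⟩
    have hmem := (convex_convexHull ℝ S) hq hy (by linarith : (0:ℝ) ≤ 1 - β)
      hβ0.le (by ring)
    have hxeq : x = (1 - β) • q + β • (a • (p - v) + b • (p + v)) := by
      subst hpq
      rw [← hx]
      have hb' : b = 1 - a := by linarith
      subst hb'
      module
    rwa [hxeq]
end

section
/- Let S ⊆ ℝ² be a nonempty finite set, let Q be its convex hull, and let D be the diameter of Q. Let c ∈ ℝ² and r ≥ 0 be the center and radius of the smallest enclosing circle of Q, i.e., Q ⊆ closedBall(c, r) and for every c' ∈ ℝ² and r' ≥ 0 with Q ⊆ closedBall(c', r') one has r ≤ r'. Then c is (√3/8)-centered in Q: there exists v ∈ ℝ² with ‖v‖ = (√3/16)·D such that the segment [c − v, c + v] is contained in Q. -/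
open RealInnerProductSpace

set_option maxHeartbeats 1000000

/-- The center of the smallest enclosing circle of the convex hull of a
finite point set in ℝ² is (√3/8)-centered. -/
theorem sec_center_is_sqrt3_div8_centered
    (S : Set (EuclideanSpace ℝ (Fin 2))) (hSfin : S.Finite) (hSne : S.Nonempty)
    (c : EuclideanSpace ℝ (Fin 2)) (r : ℝ) (hr : 0 ≤ r)
    (hball : convexHull ℝ S ⊆ Metric.closedBall c r)
    (hmin : ∀ (c' : EuclideanSpace ℝ (Fin 2)) (r' : ℝ), 0 ≤ r' →
      convexHull ℝ S ⊆ Metric.closedBall c' r' → r ≤ r') :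
    ∃ v : EuclideanSpace ℝ (Fin 2),
      ‖v‖ = Real.sqrt 3 / 16 * Metric.diam (convexHull ℝ S) ∧
      segment ℝ (c - v) (c + v) ⊆ convexHull ℝ S := by
  classical
  set Q : Set (EuclideanSpace ℝ (Fin 2)) := convexHull ℝ S with hQdef
  have hQconv : Convex ℝ Q := convex_convexHull ℝ S
  have hQcomp : IsCompact Q := hSfin.isCompact_convexHull (𝕜 := ℝ)
  have hQne : Q.Nonempty := hSne.mono (subset_convexHull ℝ S)
  rcases eq_or_lt_of_le hr with hr0 | hrpos
  · -- degenerate case r = 0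
    have hQc : Q = {c} := by
      apply Set.Subset.antisymm
      · intro x hx
        have := hball hx
        rw [← hr0, Metric.closedBall_zero] at this
        exact this
      · obtain ⟨x, hx⟩ := hQne
        have hxc := hball hx
        rw [← hr0, Metric.closedBall_zero] at hxc
        intro y hy
        simp only [Set.mem_singleton_iff] at hy hxc
        subst hy; rw [← hxc]; exact hx
    refine ⟨0, ?_, ?_⟩
    · rw [hQc]; simp
    · rw [hQc]
      intro x hx
      have : segment ℝ (c - 0) (c + 0) = {c} := by
        simp [segment_same]
      rw [this] at hx
      exact hx
  · -- main case r > 0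
    set T : Set (EuclideanSpace ℝ (Fin 2)) := S ∩ Metric.sphere c r with hTdef
    have hTfin : T.Finite := hSfin.inter_of_left _
    have hTsubQ : T ⊆ Q := fun x hx => subset_convexHull ℝ S hx.1
    have hTnorm : ∀ y ∈ T, ‖y - c‖ = r := by
      intro y hy
      have : dist y c = r := hy.2
      rwa [dist_eq_norm] at this
    -- any point of Q on the sphere is a convex combination of points of T
    have hsphere_sub : Q ∩ Metric.sphere c r ⊆ convexHull ℝ T := by
      rintro x ⟨hxQ, hxS⟩
      rw [hQdef, hSfin.convexHull_eq] at hxQ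
      obtain ⟨w, hw0, hw1, hwx⟩ := hxQ
      have hw0' : ∀ y ∈ hSfin.toFinset, 0 ≤ w y := fun y hy => hw0 y (hSfin.mem_toFinset.1 hy)
      have hxr : ‖x - c‖ = r := by rw [← dist_eq_norm]; exact hxS
      have hx' : x = ∑ y ∈ hSfin.toFinset, w y • y := by
        rw [← hwx, Finset.centerMass_eq_of_sum_1 _ _ hw1]
        simp
      have hxc : x - c = ∑ y ∈ hSfin.toFinset, w y • (y - c) := by
        calc x - c = (∑ y ∈ hSfin.toFinset, w y • y) - (∑ y ∈ hSfin.toFinset, w y) • c := by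
              rw [← hx', hw1, one_smul]
          _ = ∑ y ∈ hSfin.toFinset, (w y • y - w y • c) := by
              rw [Finset.sum_smul, ← Finset.sum_sub_distrib]
          _ = ∑ y ∈ hSfin.toFinset, w y • (y - c) := by
              simp [smul_sub]
      -- every point of S with positive weight lies on the sphere
      have hkey : ∀ y ∈ hSfin.toFinset, w y ≠ 0 → y ∈ Metric.sphere c r := by
        by_contra hcon
        push_neg at hcon
        obtain ⟨y0, hy0S, hy0w, hy0sph⟩ := hcon
        have hy0lt : ‖y0 - c‖ < r := by
          have h1 : dist y0 c ≤ r :=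
            Metric.mem_closedBall.1
              (hball (subset_convexHull ℝ S (hSfin.mem_toFinset.1 hy0S)))
          have h2 : dist y0 c ≠ r := fun h => hy0sph h
          rw [dist_eq_norm] at h1 h2
          exact lt_of_le_of_ne h1 h2
        have hy0pos : 0 < w y0 := lt_of_le_of_ne (hw0' y0 hy0S) (Ne.symm hy0w)
        have hlt : r < r := by
          calc r = ‖x - c‖ := hxr.symm
            _ ≤ ∑ y ∈ hSfin.toFinset, ‖w y • (y - c)‖ := by
                rw [hxc]; exact norm_sum_le _ _
            _ = ∑ y ∈ hSfin.toFinset, w y * ‖y - c‖ := by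
                apply Finset.sum_congr rfl
                intro y hy
                rw [norm_smul, Real.norm_eq_abs, abs_of_nonneg (hw0' y hy)]
            _ < ∑ y ∈ hSfin.toFinset, w y * r := by
                apply Finset.sum_lt_sum
                · intro y hy
                  apply mul_le_mul_of_nonneg_left _ (hw0' y hy)
                  have := Metric.mem_closedBall.1
                    (hball (subset_convexHull ℝ S (hSfin.mem_toFinset.1 hy)))
                  rwa [dist_eq_norm] at this
                · exact ⟨y0, hy0S, mul_lt_mul_of_pos_left hy0lt hy0pos⟩
            _ = r := by rw [← Finset.sum_mul, hw1, one_mul]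
        exact lt_irrefl r hlt
      -- now x is a center of mass of points of T
      rw [← hwx, ← Finset.centerMass_filter_ne_zero]
      apply Finset.centerMass_mem_convexHull
      · intro y hy
        exact hw0' y (Finset.mem_filter.1 hy).1
      · rw [Finset.sum_filter_ne_zero, hw1]; norm_num
      · intro y hy
        obtain ⟨hyS, hyw⟩ := Finset.mem_filter.1 hy
        exact ⟨hSfin.mem_toFinset.1 hyS, hkey y hyS hyw⟩
    -- Step 2 : the center lies in the convex hull of the contact points
    have hcT : c ∈ convexHull ℝ T := by
      by_contra hc
      rcases Set.eq_empty_or_nonempty T with hTe | hTne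
      · -- no contact point : the whole hull is strictly inside the ball
        obtain ⟨x0, hx0Q, hx0max⟩ := hQcomp.exists_isMaxOn hQne
          ((continuous_id.dist continuous_const).continuousOn)
        have hx0r : dist x0 c < r := by
          rcases lt_or_eq_of_le (Metric.mem_closedBall.1 (hball hx0Q)) with h | h
          · exact h
          · exfalso
            have : x0 ∈ convexHull ℝ T := hsphere_sub ⟨hx0Q, h⟩
            rw [hTe] at this
            simp at this
        have := hmin c (dist x0 c) dist_nonneg (fun x hx => hx0max hx)
        exact absurd this (not_le.2 hx0r)
      · -- separate c from the hull of contact points and move the center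
        set K : Set (EuclideanSpace ℝ (Fin 2)) := convexHull ℝ T with hKdef
        have hKconv : Convex ℝ K := convex_convexHull ℝ T
        have hKcomp : IsCompact K := hTfin.isCompact_convexHull (𝕜 := ℝ)
        have hKne : K.Nonempty := hTne.mono (subset_convexHull ℝ T)
        obtain ⟨p, hpK, hp⟩ := exists_norm_eq_iInf_of_complete_convex hKne
          hKcomp.isClosed.isComplete hKconv c
        have hproj : ∀ z ∈ K, ((inner ℝ (c - p) (z - p) : ℝ) ≤ 0) :=
          (norm_eq_iInf_iff_real_inner_le_zero hKconv hpK).1 hp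
        set u : EuclideanSpace ℝ (Fin 2) := p - c with hudef
        have hune : u ≠ 0 := by
          intro h
          have hpc : p = c := by
            have := sub_eq_zero.1 h
            exact this
          exact hc (hpc ▸ hpK)
        set η : ℝ := ‖u‖ with hηdef
        have hηpos : 0 < η := norm_pos_iff.2 hune
        set δ : ℝ := η ^ 2 with hδdef
        have hδpos : 0 < δ := by positivity
        have hKside : ∀ t ∈ K, (δ ≤ (inner ℝ (t - c) (u) : ℝ)) := by
          intro t ht
          have h1 : (inner ℝ (c - p) (t - p) : ℝ) ≤ 0 := hproj t ht
          have h2 : t - c = (t - p) + u := by rw [hudef]; abel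
          rw [h2, inner_add_left]
          have h3 : (inner ℝ (t - p) (u) : ℝ) = -(inner ℝ (c - p) (t - p) : ℝ) := by
            rw [hudef, real_inner_comm, show (p : EuclideanSpace ℝ (Fin 2)) - c = -(c - p) by abel,
              inner_neg_left]
          have h4 : (inner ℝ (u) (u) : ℝ) = δ := by
            rw [hδdef, hηdef, real_inner_self_eq_norm_sq]
          rw [h3, h4]
          linarith
        -- points of Q on the far side are strictly inside the ball
        set Q1 : Set (EuclideanSpace ℝ (Fin 2)) :=
          Q ∩ {x | (inner ℝ (x - c) (u) : ℝ) ≤ δ / 2} with hQ1def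
        have hQ1comp : IsCompact Q1 := by
          apply hQcomp.of_isClosed_subset
          · exact hQcomp.isClosed.inter (isClosed_le
              (Continuous.inner (continuous_id.sub continuous_const) continuous_const)
              continuous_const)
          · exact Set.inter_subset_left
        have hQ1lt : ∀ x ∈ Q1, dist x c < r := by
          intro x hx
          rcases lt_or_eq_of_le (Metric.mem_closedBall.1 (hball hx.1)) with h | h
          · exact h
          · exfalso
            have hxK : x ∈ K := hsphere_sub ⟨hx.1, h⟩
            have h1 := hKside x hxK
            have h2 : (inner ℝ (x - c) (u) : ℝ) ≤ δ / 2 := hx.2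
            linarith
        obtain ⟨m, hm0, hmr, hmQ1⟩ : ∃ m, 0 ≤ m ∧ m < r ∧ ∀ x ∈ Q1, dist x c ≤ m := by
          rcases Set.eq_empty_or_nonempty Q1 with hQ1e | hQ1ne
          · exact ⟨0, le_refl 0, hrpos,
              by rw [hQ1e]; intro x hx; exact absurd hx (Set.notMem_empty x)⟩
          · obtain ⟨x0, hx0Q1, hx0max⟩ := hQ1comp.exists_isMaxOn hQ1ne
              ((continuous_id.dist continuous_const).continuousOn)
            exact ⟨dist x0 c, dist_nonneg, hQ1lt x0 hx0Q1, fun x hx => hx0max hx⟩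
        have hηr : η ≤ r := by
          have := Metric.mem_closedBall.1 (hball (convexHull_min hTsubQ hQconv hpK))
          rw [dist_eq_norm] at this
          rw [hηdef, hudef]
          exact this
        set ε : ℝ := min (1/2) ((r - m) / (2 * η)) with hεdef
        have hεpos : 0 < ε := lt_min (by norm_num) (div_pos (by linarith) (by positivity))
        have hεhalf : ε ≤ 1/2 := min_le_left _ _
        have hεm : ε * η ≤ (r - m) / 2 := by
          have h := min_le_right (1/2) ((r - m) / (2 * η))
          calc ε * η ≤ ((r - m) / (2 * η)) * η := by
                apply mul_le_mul_of_nonneg_right _ (le_of_lt hηpos)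
                rw [hεdef]; exact h
            _ = (r - m) / 2 := by field_simp
        set c' : EuclideanSpace ℝ (Fin 2) := c + ε • u with hc'def
        set r' : ℝ := max (Real.sqrt (r ^ 2 - ε * δ / 2)) (m + ε * η) with hr'def
        have hr'0 : 0 ≤ r' := le_trans (by positivity) (le_max_right _ _)
        have hr'r : r' < r := by
          apply max_lt
          · have hlt : r ^ 2 - ε * δ / 2 < r ^ 2 := by nlinarith
            calc Real.sqrt (r ^ 2 - ε * δ / 2) < Real.sqrt (r ^ 2) := by
                  apply Real.sqrt_lt_sqrt _ hlt
                  nlinarith [hηr, hεhalf, hηpos, hrpos]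
              _ = r := Real.sqrt_sq (le_of_lt hrpos)
          · linarith
        have hsub : Q ⊆ Metric.closedBall c' r' := by
          intro x hxQ
          rw [Metric.mem_closedBall]
          rcases le_or_gt ((inner ℝ (x - c) (u) : ℝ)) (δ / 2) with hside | hside
          · -- x is on the far side, bounded by m
            have hx1 : x ∈ Q1 := ⟨hxQ, hside⟩
            have htri : dist x c' ≤ dist x c + dist c c' := dist_triangle x c c'
            have hcc' : dist c c' = ε * η := by
              rw [hc'def, dist_eq_norm]
              rw [show c - (c + ε • u) = -(ε • u) by abel, norm_neg, norm_smul,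
                Real.norm_eq_abs, abs_of_pos hεpos, hηdef]
            have := hmQ1 x hx1
            calc dist x c' ≤ m + ε * η := by rw [hcc'] at htri; linarith
              _ ≤ r' := le_max_right _ _
          · -- x is near the contact zone : moving towards u decreases the distance
            have hd2 : dist x c' ^ 2 ≤ r ^ 2 - ε * δ / 2 := by
              have hxc : ‖x - c‖ ≤ r := by
                have := Metric.mem_closedBall.1 (hball hxQ); rwa [dist_eq_norm] at this
              have hexp : dist x c' ^ 2
                  = ‖x - c‖ ^ 2 - 2 * (ε * (inner ℝ (x - c) (u) : ℝ)) + ε ^ 2 * δ := by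
                rw [dist_eq_norm, hc'def,
                  show x - (c + ε • u) = (x - c) - ε • u by abel,
                  norm_sub_sq_real, real_inner_smul_right, norm_smul, Real.norm_eq_abs,
                  abs_of_pos hεpos, mul_pow, hδdef, hηdef]
              have e1 : ε * (δ / 2) ≤ ε * (inner ℝ (x - c) (u) : ℝ) :=
                mul_le_mul_of_nonneg_left hside.le hεpos.le
              have e2 : ε * (ε * δ) ≤ (1/2) * (ε * δ) :=
                mul_le_mul_of_nonneg_right hεhalf (mul_nonneg hεpos.le hδpos.le)
              have e3 : ‖x - c‖ ^ 2 ≤ r ^ 2 := pow_le_pow_left₀ (norm_nonneg _) hxc 2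
              nlinarith [e1, e2, e3]
            calc dist x c' ≤ Real.sqrt (r ^ 2 - ε * δ / 2) := by
                  rw [← Real.sqrt_sq (dist_nonneg (x := x) (y := c'))]
                  exact Real.sqrt_le_sqrt hd2
              _ ≤ r' := le_max_left _ _
        exact absurd (hmin c' r' hr'0 hsub) (not_le.2 hr'r)
    have hcQ : c ∈ Q := convexHull_min hTsubQ hQconv hcT
    -- Step 3 : Caratheodory, at most 3 contact points suffice
    rw [convexHull_eq_union] at hcT
    simp only [Set.mem_iUnion] at hcT
    obtain ⟨t, htT, hai, hct⟩ := hcT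
    have hcard : t.card ≤ 3 := by
      have h1 := hai.card_le_finrank_succ
      have h2 : Module.finrank ℝ
          (vectorSpan ℝ (Set.range ((↑) : t → EuclideanSpace ℝ (Fin 2)))) ≤ 2 := by
        have := Submodule.finrank_le
          (vectorSpan ℝ (Set.range ((↑) : t → EuclideanSpace ℝ (Fin 2))))
        rwa [finrank_euclideanSpace_fin] at this
      have h3 : Fintype.card ↥t = t.card := Fintype.card_coe t
      omega
    rw [Finset.convexHull_eq] at hct
    obtain ⟨w, hw0, hw1, hwc⟩ := hct
    have hceq : ∑ y ∈ t, w y • y = c := by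
      rw [← hwc, Finset.centerMass_eq_of_sum_1 _ _ hw1]
      simp
    have htnorm : ∀ y ∈ t, ‖y - c‖ = r := fun y hy => hTnorm y (htT hy)
    have htQ : ∀ y ∈ t, y ∈ Q := fun y hy => hTsubQ (htT hy)
    have hsum0 : ∑ y ∈ t, w y • (y - c) = 0 := by
      have h1 : ∀ y ∈ t, w y • (y - c) = w y • y - w y • c := fun y _ => smul_sub _ _ _
      rw [Finset.sum_congr rfl h1, Finset.sum_sub_distrib, ← Finset.sum_smul, hceq, hw1,
        one_smul, sub_self]
    have hcnott : c ∉ t := by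
      intro h
      have := htnorm c h
      simp only [sub_self, norm_zero] at this
      linarith
    -- Step 4 : some weight is at least 1/3
    have hmax : ∃ i ∈ t, 1/3 ≤ w i := by
      by_contra hcon
      push_neg at hcon
      have htne : t.Nonempty := by
        rcases Finset.eq_empty_or_nonempty t with he | hne
        · rw [he] at hw1; simp at hw1
        · exact hne
      have hlt : (1:ℝ) < 1 := by
        calc (1:ℝ) = ∑ y ∈ t, w y := hw1.symm
          _ < ∑ _y ∈ t, (1:ℝ)/3 := Finset.sum_lt_sum_of_nonempty htne (fun y hy => hcon y hy)
          _ = (t.card : ℝ) * (1/3) := by rw [Finset.sum_const, nsmul_eq_mul]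
          _ ≤ 3 * (1/3) := by
              apply mul_le_mul_of_nonneg_right _ (by norm_num)
              exact_mod_cast hcard
          _ = 1 := by norm_num
      linarith
    -- Step 5 : two contact points with a wide angle at the center
    have hpair : ∃ y ∈ t, ∃ z ∈ t, y ≠ z ∧ (inner ℝ (y - c) (z - c) : ℝ) ≤ -(r^2)/2 := by
      by_contra hcon
      push_neg at hcon
      have hsq : 1 ≤ 3 * ∑ y ∈ t, (w y)^2 := by
        have h1 : (∑ y ∈ t, w y)^2 ≤ (t.card : ℝ) * ∑ y ∈ t, (w y)^2 := by
          exact_mod_cast sq_sum_le_card_mul_sum_sq (s := t) (f := w)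
        rw [hw1] at h1
        have h2 : (t.card : ℝ) ≤ 3 := by exact_mod_cast hcard
        nlinarith [Finset.sum_nonneg (fun y (_ : y ∈ t) => sq_nonneg (w y))]
      have hdouble : ∑ y ∈ t, ∑ z ∈ t, (w y * w z) * (inner ℝ (y - c) (z - c) : ℝ) = 0 := by
        have h0 : (inner ℝ (∑ y ∈ t, w y • (y - c)) (∑ z ∈ t, w z • (z - c)) : ℝ) = 0 := by
          rw [hsum0]
          simp
        rw [sum_inner] at h0
        calc ∑ y ∈ t, ∑ z ∈ t, (w y * w z) * (inner ℝ (y - c) (z - c) : ℝ)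
            = ∑ y ∈ t, (inner ℝ (w y • (y - c)) (∑ z ∈ t, w z • (z - c)) : ℝ) := by
              apply Finset.sum_congr rfl
              intro y _
              rw [real_inner_smul_left, inner_sum, Finset.mul_sum]
              apply Finset.sum_congr rfl
              intro z _
              rw [real_inner_smul_right]
              ring
          _ = 0 := h0
      have hsplit : ∑ y ∈ t, ∑ z ∈ t, (w y * w z) * (inner ℝ (y - c) (z - c) : ℝ)
          = (∑ y ∈ t, (w y)^2) * r^2
            + ∑ y ∈ t, ∑ z ∈ t.erase y, (w y * w z) * (inner ℝ (y - c) (z - c) : ℝ) := by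
        rw [Finset.sum_mul, ← Finset.sum_add_distrib]
        apply Finset.sum_congr rfl
        intro y hy
        rw [← Finset.add_sum_erase _ _ hy]
        congr 1
        rw [real_inner_self_eq_norm_sq, htnorm y hy]
        ring
      have hcross : ∑ y ∈ t, ∑ z ∈ t.erase y, (w y * w z) = 1 - ∑ y ∈ t, (w y)^2 := by
        calc ∑ y ∈ t, ∑ z ∈ t.erase y, (w y * w z)
            = ∑ y ∈ t, (w y * (1 - w y)) := by
              apply Finset.sum_congr rfl
              intro y hy
              rw [← Finset.mul_sum, Finset.sum_erase_eq_sub hy, hw1]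
          _ = (∑ y ∈ t, w y) - ∑ y ∈ t, (w y)^2 := by
              rw [← Finset.sum_sub_distrib]
              apply Finset.sum_congr rfl
              intro y _
              ring
          _ = 1 - ∑ y ∈ t, (w y)^2 := by rw [hw1]
      by_cases hpos : ∃ y ∈ t, ∃ z ∈ t, y ≠ z ∧ 0 < w y * w z
      · obtain ⟨y0, hy0, z0, hz0, hyz, hwpos⟩ := hpos
        have hstrict : -(r^2)/2 * (1 - ∑ y ∈ t, (w y)^2) <
            ∑ y ∈ t, ∑ z ∈ t.erase y, (w y * w z) * (inner ℝ (y - c) (z - c) : ℝ) := by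
          rw [← hcross, Finset.mul_sum]
          apply Finset.sum_lt_sum
          · intro y hy
            rw [Finset.mul_sum]
            apply Finset.sum_le_sum
            intro z hz
            have hzy : z ≠ y := (Finset.mem_erase.1 hz).1
            have hzt : z ∈ t := (Finset.mem_erase.1 hz).2
            have hgt := hcon y hy z hzt (Ne.symm hzy)
            have hwnn : 0 ≤ w y * w z := mul_nonneg (hw0 y hy) (hw0 z hzt)
            calc -(r^2)/2 * (w y * w z) = (w y * w z) * (-(r^2)/2) := by ring
              _ ≤ (w y * w z) * (inner ℝ (y - c) (z - c) : ℝ) :=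
                  mul_le_mul_of_nonneg_left hgt.le hwnn
          · refine ⟨y0, hy0, ?_⟩
            rw [Finset.mul_sum]
            apply Finset.sum_lt_sum
            · intro z hz
              have hzy : z ≠ y0 := (Finset.mem_erase.1 hz).1
              have hzt : z ∈ t := (Finset.mem_erase.1 hz).2
              have hgt := hcon y0 hy0 z hzt (Ne.symm hzy)
              have hwnn : 0 ≤ w y0 * w z := mul_nonneg (hw0 y0 hy0) (hw0 z hzt)
              calc -(r^2)/2 * (w y0 * w z) = (w y0 * w z) * (-(r^2)/2) := by ring
                _ ≤ (w y0 * w z) * (inner ℝ (y0 - c) (z - c) : ℝ) :=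
                    mul_le_mul_of_nonneg_left hgt.le hwnn
            · refine ⟨z0, Finset.mem_erase.2 ⟨Ne.symm hyz, hz0⟩, ?_⟩
              have hgt := hcon y0 hy0 z0 hz0 hyz
              calc -(r^2)/2 * (w y0 * w z0) = (w y0 * w z0) * (-(r^2)/2) := by ring
                _ < (w y0 * w z0) * (inner ℝ (y0 - c) (z0 - c) : ℝ) :=
                    mul_lt_mul_of_pos_left hgt hwpos
        rw [hsplit] at hdouble
        nlinarith [hdouble, hstrict, hsq, hrpos,
          mul_le_mul_of_nonneg_left hsq (sq_nonneg r)]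
      · push_neg at hpos
        obtain ⟨y1, hy1, hy1pos⟩ : ∃ y ∈ t, 0 < w y := by
          by_contra hall
          push_neg at hall
          have : ∑ y ∈ t, w y ≤ 0 := Finset.sum_nonpos hall
          linarith
        have hzero : ∀ z ∈ t, z ≠ y1 → w z = 0 := by
          intro z hz hne
          have h1 := hpos y1 hy1 z hz (Ne.symm hne)
          have h2 := hw0 z hz
          nlinarith
        have hcy : c = y1 := by
          rw [← hceq, Finset.sum_eq_single_of_mem y1 hy1]
          · have hwy1 : w y1 = 1 := by
              rw [← hw1, Finset.sum_eq_single_of_mem y1 hy1]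
              intro z hz hne
              exact hzero z hz hne
            rw [hwy1, one_smul]
          · intro z hz hne
            rw [hzero z hz hne, zero_smul]
        have hn := htnorm y1 hy1
        rw [← hcy] at hn
        simp only [sub_self, norm_zero] at hn
        linarith
    -- Step 6 : diameter bounds and construction of the segment
    obtain ⟨p1, hp1t, hp1w⟩ := hmax
    obtain ⟨y1, hy1t, z1, hz1t, hyz1, hinner⟩ := hpair
    set D : ℝ := Metric.diam Q with hD
    have hD0 : 0 ≤ D := Metric.diam_nonneg
    have hD2r : D ≤ 2 * r := by
      apply Metric.diam_le_of_forall_dist_le (by linarith)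
      intro x hx y hy
      calc dist x y ≤ dist x c + dist c y := dist_triangle _ _ _
        _ ≤ r + r := add_le_add (Metric.mem_closedBall.1 (hball hx))
            (by rw [dist_comm]; exact Metric.mem_closedBall.1 (hball hy))
        _ = 2 * r := by ring
    have hDr3 : Real.sqrt 3 * r ≤ D := by
      have hyz2 : 3 * r^2 ≤ ‖y1 - z1‖^2 := by
        have hexp : ‖y1 - z1‖^2
            = ‖y1 - c‖^2 - 2*(inner ℝ (y1 - c) (z1 - c) : ℝ) + ‖z1 - c‖^2 := by
          rw [show y1 - z1 = (y1 - c) - (z1 - c) by abel, norm_sub_sq_real]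
        rw [hexp, htnorm y1 hy1t, htnorm z1 hz1t]
        linarith
      have h1 : Real.sqrt 3 * r ≤ ‖y1 - z1‖ := by
        have h3 : (Real.sqrt 3 * r)^2 = 3 * r^2 := by
          rw [mul_pow, Real.sq_sqrt (by norm_num : (0:ℝ) ≤ 3)]
        nlinarith [norm_nonneg (y1 - z1), Real.sqrt_nonneg 3, hrpos.le,
          mul_nonneg (Real.sqrt_nonneg 3) hrpos.le]
      calc Real.sqrt 3 * r ≤ ‖y1 - z1‖ := h1
        _ = dist y1 z1 := (dist_eq_norm _ _).symm
        _ ≤ D := Metric.dist_le_diam_of_mem hQcomp.isBounded (htQ y1 hy1t) (htQ z1 hz1t)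
    have hp1Q : p1 ∈ Q := htQ p1 hp1t
    have hp1r : ‖p1 - c‖ = r := htnorm p1 hp1t
    have hwp1pos : 0 < w p1 := by linarith
    have hwp1le : w p1 ≤ 1 := by
      rw [← hw1]
      exact Finset.single_le_sum (fun y hy => hw0 y hy) hp1t
    set sc : ℝ := Real.sqrt 3 * D / (16 * r) with hsc
    have hs0 : 0 ≤ sc := by positivity
    have hs12 : sc ≤ 1/2 := by
      rw [hsc, div_le_iff₀ (by positivity)]
      have h3 : Real.sqrt 3 ≤ 2 := by
        nlinarith [Real.sq_sqrt (show (0:ℝ) ≤ 3 by norm_num), Real.sqrt_nonneg 3]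
      nlinarith [Real.sqrt_nonneg 3, hD0, hrpos]
    refine ⟨sc • (p1 - c), ?_, ?_⟩
    · rw [norm_smul, Real.norm_eq_abs, abs_of_nonneg hs0, hp1r, hsc]
      field_simp
    · apply hQconv.segment_subset
      · -- c - v ∈ Q
        set k : ℝ := sc / w p1 with hk
        have hk0 : 0 ≤ k := div_nonneg hs0 hwp1pos.le
        set W : ℝ := ∑ y ∈ t.erase p1, w y with hW
        have hWeq : W = 1 - w p1 := by rw [hW, Finset.sum_erase_eq_sub hp1t, hw1]
        have hW0 : 0 ≤ W := by rw [hWeq]; linarith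
        have hkW : k * W ≤ 1 := by
          rw [hk, hWeq, div_mul_eq_mul_div, div_le_one hwp1pos]
          nlinarith
        have hE : ∑ y ∈ t.erase p1, w y • y = W • c - (w p1) • (p1 - c) := by
          have h1 : w p1 • (p1 - c) + ∑ y ∈ t.erase p1, w y • (y - c) = 0 := by
            have h0 := Finset.add_sum_erase t (fun y => w y • (y - c)) hp1t
            rw [hsum0] at h0
            exact h0
          have h2 : ∑ y ∈ t.erase p1, w y • (y - c)
              = (∑ y ∈ t.erase p1, w y • y) - W • c := by
            rw [hW, Finset.sum_smul, ← Finset.sum_sub_distrib]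
            apply Finset.sum_congr rfl
            intro y _
            rw [smul_sub]
          rw [h2] at h1
          have h4 : (∑ y ∈ t.erase p1, w y • y) - W • c = -(w p1 • (p1 - c)) :=
            eq_neg_of_add_eq_zero_right h1
          have h5 : (∑ y ∈ t.erase p1, w y • y) = -(w p1 • (p1 - c)) + W • c :=
            sub_eq_iff_eq_add.1 h4
          rw [h5]
          abel
        have hcomb : c - sc • (p1 - c)
            = (1 - k * W) • c + ∑ y ∈ t.erase p1, (k * w y) • y := by
          have hsum' : ∑ y ∈ t.erase p1, (k * w y) • y = k • (W • c - w p1 • (p1 - c)) := by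
            rw [← hE, Finset.smul_sum]
            apply Finset.sum_congr rfl
            intro y _
            rw [smul_smul]
          rw [hsum']
          have hsk : k * w p1 = sc := by
            rw [hk]
            field_simp
          rw [← hsk]
          module
        have hcne : c ∉ t.erase p1 := fun h => hcnott (Finset.mem_of_mem_erase h)
        have hmem := hQconv.sum_mem (t := insert c (t.erase p1))
          (w := fun x => if x = c then 1 - k * W else k * w x) (z := id)
          (by
            intro i hi
            show (0:ℝ) ≤ if i = c then 1 - k * W else k * w i
            rcases Finset.mem_insert.1 hi with h | h
            · rw [if_pos h]
              linarith
            · rw [if_neg (by rintro rfl; exact hcne h)]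
              exact mul_nonneg hk0 (hw0 i (Finset.mem_of_mem_erase h)))
          (by
            rw [Finset.sum_insert hcne]
            show (if c = c then 1 - k * W else k * w c)
              + (∑ i ∈ t.erase p1, if i = c then 1 - k * W else k * w i) = 1
            rw [if_pos rfl]
            have h6 : ∀ i ∈ t.erase p1, (if i = c then 1 - k * W else k * w i) = k * w i := by
              intro i hi
              rw [if_neg (by rintro rfl; exact hcne hi)]
            rw [Finset.sum_congr rfl h6, ← Finset.mul_sum, ← hW]
            ring)
          (by
            intro i hi
            rcases Finset.mem_insert.1 hi with h | h
            · rw [h]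
              exact hcQ
            · exact htQ i (Finset.mem_of_mem_erase h))
        have hfinal : (∑ i ∈ insert c (t.erase p1),
              (if i = c then 1 - k * W else k * w i) • id i)
            = (1 - k * W) • c + ∑ y ∈ t.erase p1, (k * w y) • y := by
          rw [Finset.sum_insert hcne]
          simp only [id_eq, if_true]
          congr 1
          apply Finset.sum_congr rfl
          intro i hi
          have hne : i ≠ c := by rintro rfl; exact hcne hi
          rw [if_neg hne]
        rw [hcomb, ← hfinal]
        exact hmem
      · -- c + v ∈ Q
        have heq : c + sc • (p1 - c) = (1 - sc) • c + sc • p1 := by module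
        rw [heq]
        exact hQconv hcQ hp1Q (by linarith) hs0 (by ring)
end

section
/- Let 0 < λ ≤ 1, R > 0, Δ > 0 with R ≤ Δ/√3. Let o, b, P, Q ∈ ℝ² with ‖b − o‖ = ‖P − o‖ = ‖Q − o‖ = R, ‖P − b‖ = ‖Q − b‖ = λ/8, and P ≠ Q. Then the height h := ‖b − (P + Q)/2‖ of the circular segment of the circle of radius R around o cut off by the chord PQ and containing b satisfies h ≥ (√3·λ²)/(64·π·Δ). -/
set_option maxHeartbeats 1600000 in
/-- Lower bound on the height of the circular segment of chord length λ/4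
of a circle of radius R ≤ Δ/√3. -/
theorem circular_segment_height_lower_bound
    (lam R Δ : ℝ) (hlam0 : 0 < lam) (hlam1 : lam ≤ 1)
    (hR : 0 < R) (hΔ : 0 < Δ) (hRΔ : R ≤ Δ / Real.sqrt 3)
    (o b P Q : EuclideanSpace ℝ (Fin 2))
    (hb : ‖b - o‖ = R) (hP : ‖P - o‖ = R) (hQ : ‖Q - o‖ = R)
    (hPb : ‖P - b‖ = lam / 8) (hQb : ‖Q - b‖ = lam / 8) (hPQ : P ≠ Q) :
    Real.sqrt 3 * lam ^ 2 / (64 * Real.pi * Δ) ≤ ‖b - midpoint ℝ P Q‖ := by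
  set m := midpoint ℝ P Q with hm
  have hPm : P - m = (2:ℝ)⁻¹ • (P - Q) := by
    rw [hm, midpoint_eq_smul_add, invOf_eq_inv]
    module
  -- orthogonality of P - Q with b - m
  have e1 : ‖P - b‖ ^ 2 = ‖Q - b‖ ^ 2 := by rw [hPb, hQb]
  have e2 : ‖P - o‖ ^ 2 = ‖Q - o‖ ^ 2 := by rw [hP, hQ]
  have expand : ∀ x y : EuclideanSpace ℝ (Fin 2),
      ‖x - y‖ ^ 2 = ‖x‖ ^ 2 - 2 * inner ℝ x y + ‖y‖ ^ 2 := by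
    intro x y
    rw [@norm_sub_sq_real]
  have hinner_m : ∀ y : EuclideanSpace ℝ (Fin 2),
      (inner ℝ (P - Q) m : ℝ) = (‖P‖ ^ 2 - ‖Q‖ ^ 2) / 2 := by
    intro y
    rw [hm, midpoint_eq_smul_add, inner_smul_right, inner_sub_left, inner_add_right,
      inner_add_right, real_inner_self_eq_norm_sq, real_inner_self_eq_norm_sq,
      real_inner_comm Q P]
    simp only [invOf_eq_inv]
    ring
  have hob : (inner ℝ (P - Q) (b - m) : ℝ) = 0 := by
    rw [inner_sub_right, hinner_m b, inner_sub_left]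
    rw [expand, expand] at e1
    linarith
  have hoo : (inner ℝ (P - Q) (o - m) : ℝ) = 0 := by
    rw [inner_sub_right, hinner_m o, inner_sub_left]
    rw [expand, expand] at e2
    linarith
  -- Pythagoras
  have pyth : ∀ x : EuclideanSpace ℝ (Fin 2), (inner ℝ (P - Q) (x - m) : ℝ) = 0 →
      ‖P - x‖ ^ 2 = ‖P - m‖ ^ 2 + ‖m - x‖ ^ 2 := by
    intro x hx
    have hd : P - x = (P - m) + (m - x) := by abel
    have horth : (inner ℝ (P - m) (m - x) : ℝ) = 0 := by
      rw [hPm, inner_smul_left]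
      have : (m - x) = -(x - m) := by abel
      rw [this, inner_neg_right, hx]
      simp
    rw [hd, @norm_add_sq_real, horth]
    ring
  have pb : ‖P - b‖ ^ 2 = ‖P - m‖ ^ 2 + ‖m - b‖ ^ 2 := pyth b hob
  have po : ‖P - o‖ ^ 2 = ‖P - m‖ ^ 2 + ‖m - o‖ ^ 2 := pyth o hoo
  -- triangle inequality
  have t1 : ‖b - o‖ ≤ ‖b - m‖ + ‖m - o‖ := norm_sub_le_norm_sub_add_norm_sub b m o
  have t2 : ‖b - m‖ ≤ ‖b - o‖ + ‖o - m‖ := norm_sub_le_norm_sub_add_norm_sub b o m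
  have hmb : ‖m - b‖ = ‖b - m‖ := norm_sub_rev m b
  have hmo : ‖o - m‖ = ‖m - o‖ := norm_sub_rev o m
  set h := ‖b - m‖ with hh
  have hnn : 0 ≤ h := norm_nonneg _
  -- key: lam^2/64 ≤ 2 R h
  have key : lam ^ 2 / 64 ≤ 2 * R * h := by
    have hPb2 : ‖P - b‖ ^ 2 = lam ^ 2 / 64 := by rw [hPb]; ring
    have hPo2 : ‖P - o‖ ^ 2 = R ^ 2 := by rw [hP]
    rw [hmb] at pb
    rw [hPb2] at pb
    rw [hPo2] at po
    rw [hb] at t1 t2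
    rw [hmo] at t2
    nlinarith [norm_nonneg (m - o), sq_nonneg (R - h)]
  -- arithmetic conclusion
  have hs3 : (0:ℝ) < Real.sqrt 3 := by positivity
  have hs3R : Real.sqrt 3 * R ≤ Δ := by
    rw [le_div_iff₀ hs3] at hRΔ
    linarith [hRΔ, mul_comm R (Real.sqrt 3)]
  have hπ : (3:ℝ) < Real.pi := Real.pi_gt_three
  rw [div_le_iff₀ (by positivity : (0:ℝ) < 64 * Real.pi * Δ)]
  nlinarith [mul_le_mul_of_nonneg_right hs3R hnn, mul_le_mul_of_nonneg_left key hs3.le,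
    mul_nonneg hΔ.le hnn, mul_le_mul_of_nonneg_left key (mul_pos hs3 hR).le]
end

section
/- Let 0 < λ ≤ 1, o ∈ ℝ², R > 0, let u ∈ ℝ² be a unit vector, and let h > 0. Suppose the circular segment C = {z ∈ ℝ² : ‖z − o‖ ≤ R and ⟨z − o, u⟩ ≥ R − h} has diameter at most λ/4. Then for all a, b in the closed ball of radius R around o with ‖a − b‖ > λ/4, the midpoint m = (a + b)/2 lies outside the half-height segment, i.e., ⟨m − o, u⟩ < R − h/2. In particular, if a robot's target point is the midpoint of a line segment of length greater than λ/4 contained in the closed ball of radius R around o, that target point lies outside the circular segment of height h/2 in direction u. -/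
open scoped RealInnerProductSpace

/-- If the circular segment of height h has diameter at most λ/4, then the
midpoint of any segment in the disk of length greater than λ/4 lies outside the
circular segment of height h/2. -/
theorem midpoint_outside_half_height_segment
    (lam : ℝ) (hlam0 : 0 < lam) (hlam1 : lam ≤ 1)
    (o : EuclideanSpace ℝ (Fin 2)) (R : ℝ) (hR : 0 < R)
    (u : EuclideanSpace ℝ (Fin 2)) (hu : ‖u‖ = 1) (h : ℝ) (hh : 0 < h)
    (hdiam : Metric.diam {z : EuclideanSpace ℝ (Fin 2) |
      ‖z - o‖ ≤ R ∧ R - h ≤ ⟪z - o, u⟫} ≤ lam / 4) :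
    ∀ a ∈ Metric.closedBall o R, ∀ b ∈ Metric.closedBall o R,
      lam / 4 < ‖a - b‖ → ⟪midpoint ℝ a b - o, u⟫ < R - h / 2 := by
  intro a ha b hb hab
  by_contra hcon
  push_neg at hcon
  set C := {z : EuclideanSpace ℝ (Fin 2) | ‖z - o‖ ≤ R ∧ R - h ≤ ⟪z - o, u⟫} with hCdef
  have hC : C ⊆ Metric.closedBall o R := fun z hz => by
    simpa [Metric.mem_closedBall, dist_eq_norm] using hz.1
  have hbdd : Bornology.IsBounded C := Metric.isBounded_closedBall.subset hC
  have ha' : ‖a - o‖ ≤ R := by simpa [dist_eq_norm] using ha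
  have hb' : ‖b - o‖ ≤ R := by simpa [dist_eq_norm] using hb
  have hau : ⟪a - o, u⟫ ≤ R := by
    have := real_inner_le_norm (a - o) u
    rw [hu, mul_one] at this
    linarith
  have hbu : ⟪b - o, u⟫ ≤ R := by
    have := real_inner_le_norm (b - o) u
    rw [hu, mul_one] at this
    linarith
  have hm : midpoint ℝ a b - o = (2:ℝ)⁻¹ • ((a - o) + (b - o)) := by
    rw [midpoint_eq_smul_add, invOf_eq_inv]
    module
  have hmi : ⟪midpoint ℝ a b - o, u⟫ = (⟪a - o, u⟫ + ⟪b - o, u⟫) / 2 := by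
    rw [hm, real_inner_smul_left, inner_add_left]
    ring
  rw [hmi] at hcon
  have haC : a ∈ C := ⟨ha', by linarith⟩
  have hbC : b ∈ C := ⟨hb', by linarith⟩
  have hd := Metric.dist_le_diam_of_mem hbdd haC hbC
  rw [dist_eq_norm] at hd
  linarith
end

section
/- Let n ≥ 1, 0 < λ ≤ 1, and let x : ℕ → Fin n → ℝ² be a λ-gathering trajectory of n robots in ℝ² with viewing range 1. Let Δ be the diameter of the initial configuration, and for each round s let R(s) be the radius of the smallest enclosing circle of {x s i : i ∈ Fin n}. Then for every round t in which the diameter of {x t i : i ∈ Fin n} is at least 1/2, one has R(t+2) ≤ R(t) − (√3·λ³)/(256·π·Δ). -/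
set_option maxHeartbeats 1600000

private lemma sqrt3_le : Real.sqrt 3 ≤ 1.75 := by
  rw [show (1.75:ℝ) = Real.sqrt (1.75^2) from (Real.sqrt_sq (by norm_num)).symm]
  exact Real.sqrt_le_sqrt (by norm_num)

/-- midpoint of a chord of length ≥ θ inside a ball of radius R around c is θ²/(8R)-deep. -/
private lemma chord_bound {E : Type*} [NormedAddCommGroup E] [InnerProductSpace ℝ E]
    {a b c : E} {R θ : ℝ} (hR : 0 < R) (hθ : 0 ≤ θ) (hθR : θ^2 ≤ 8*R^2)
    (ha : dist a c ≤ R) (hb : dist b c ≤ R) (hab : θ ≤ dist a b) :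
    dist (midpoint ℝ a b) c ≤ R - θ^2/(8*R) := by
  have hmc : midpoint ℝ a b - c = (2⁻¹ : ℝ) • ((a - c) + (b - c)) := by
    rw [midpoint_eq_smul_add, invOf_eq_inv]
    module
  have h2 : dist (midpoint ℝ a b) c = 2⁻¹ * ‖(a-c) + (b-c)‖ := by
    rw [dist_eq_norm, hmc, norm_smul]; norm_num
  have hpar := parallelogram_law_with_norm ℝ (a-c) (b-c)
  have hsub : (a-c) - (b-c) = a - b := by abel
  rw [hsub] at hpar
  have hab' : ‖a - b‖ = dist a b := (dist_eq_norm a b).symm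
  have hua : ‖a - c‖ = dist a c := (dist_eq_norm a c).symm
  have hub : ‖b - c‖ = dist b c := (dist_eq_norm b c).symm
  rw [hab', hua, hub] at hpar
  have key : dist (midpoint ℝ a b) c ^ 2 ≤ R^2 - θ^2/4 := by
    rw [h2]
    have h3 : 0 ≤ dist a c := dist_nonneg
    have h4 : 0 ≤ dist b c := dist_nonneg
    nlinarith [norm_nonneg ((a-c)+(b-c))]
  have hA : 0 ≤ R - θ^2/(8*R) := by
    rw [sub_nonneg, div_le_iff₀ (by positivity)]; nlinarith
  have key2 : dist (midpoint ℝ a b) c ^2 ≤ (R - θ^2/(8*R))^2 := by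
    have he : (R - θ^2/(8*R))^2 = R^2 - θ^2/4 + (θ^2/(8*R))^2 := by
      field_simp; ring
    nlinarith [sq_nonneg (θ^2/(8*R))]
  calc dist (midpoint ℝ a b) c = Real.sqrt (dist (midpoint ℝ a b) c ^2) :=
        (Real.sqrt_sq dist_nonneg).symm
    _ ≤ Real.sqrt ((R - θ^2/(8*R))^2) := Real.sqrt_le_sqrt key2
    _ = R - θ^2/(8*R) := Real.sqrt_sq hA

private lemma combo_est {E : Type*} [NormedAddCommGroup E] [NormedSpace ℝ E]
    {q z c p : E} {u v : ℝ} (hu : 0 ≤ u) (hv : 0 ≤ v) (huv : u + v = 1)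
    (hp : u • q + v • z = p) :
    dist p c ≤ u * dist q c + v * dist z c ∧ dist p q ≤ v * dist z q := by
  subst hp
  have e1 : u • (q - c) + v • (z - c) = (u • q + v • z) - (u+v) • c := by module
  rw [huv, one_smul] at e1
  constructor
  · rw [dist_eq_norm, ← e1]
    refine (norm_add_le _ _).trans ?_
    rw [norm_smul, norm_smul, Real.norm_of_nonneg hu, Real.norm_of_nonneg hv,
      dist_eq_norm, dist_eq_norm]
  · have e2 : v • (z - q) = (u • q + v • z) - (u+v) • q := by module
    rw [huv, one_smul] at e2
    rw [dist_eq_norm, ← e2, norm_smul, Real.norm_of_nonneg hv, dist_eq_norm]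

/-- For a λ-gathering trajectory in ℝ², the radius of the global smallest
enclosing circle decreases by at least √3·λ³/(256·π·Δ) every two rounds as long as the
diameter is at least 1/2. -/
theorem sec_radius_decrease_2D
    (n : ℕ) (hn : 1 ≤ n) (lam : ℝ) (hlam0 : 0 < lam) (hlam1 : lam ≤ 1)
    (x : ℕ → Fin n → EuclideanSpace ℝ (Fin 2))
    (hmove : ∀ (t : ℕ) (i : Fin n), ∃ a b : EuclideanSpace ℝ (Fin 2),
      segment ℝ a b ⊆ convexHull ℝ (x t '' {j | dist (x t j) (x t i) ≤ 1}) ∧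
      dist a b = lam * Metric.diam (x t '' {j | dist (x t j) (x t i) ≤ 1}) ∧
      x (t + 1) i = midpoint ℝ a b)
    (hconn : ∀ t : ℕ,
      (SimpleGraph.fromRel (fun i j : Fin n => dist (x t i) (x t j) ≤ 1)).Connected)
    (hcollapse : ∀ (t : ℕ) (i j : Fin n),
      {k | dist (x t k) (x t i) ≤ 1} = {k | dist (x t k) (x t j) ≤ 1} →
      Metric.diam (x t '' {k | dist (x t k) (x t i) ≤ 1}) ≤ 1 / 2 →
      x (t + 1) i = x (t + 1) j)
    -- c s, R s are center and radius of the smallest enclosing circle in round s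
    (c : ℕ → EuclideanSpace ℝ (Fin 2)) (R : ℕ → ℝ) (hR0 : ∀ s : ℕ, 0 ≤ R s)
    (hball : ∀ (s : ℕ) (i : Fin n), x s i ∈ Metric.closedBall (c s) (R s))
    (hmin : ∀ (s : ℕ) (c' : EuclideanSpace ℝ (Fin 2)) (r' : ℝ), 0 ≤ r' →
      (∀ i : Fin n, x s i ∈ Metric.closedBall c' r') → R s ≤ r')
    (t : ℕ) (hdiam : 1 / 2 ≤ Metric.diam (Set.range (x t))) :
    R (t + 2) ≤ R t -
      Real.sqrt 3 * lam ^ 3 / (256 * Real.pi * Metric.diam (Set.range (x 0))) := by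
  have i0 : Fin n := ⟨0, hn⟩
  set Δ := Metric.diam (Set.range (x 0)) with hΔdef
  -- R t ≥ 1/4
  have hdle : Metric.diam (Set.range (x t)) ≤ 2 * R t := by
    apply Metric.diam_le_of_forall_dist_le (by linarith [hR0 t])
    rintro _ ⟨i, rfl⟩ _ ⟨j, rfl⟩
    calc dist (x t i) (x t j) ≤ dist (x t i) (c t) + dist (x t j) (c t) :=
          dist_triangle_right _ _ _
      _ ≤ 2 * R t := by
          have h1 := Metric.mem_closedBall.mp (hball t i)
          have h2 := Metric.mem_closedBall.mp (hball t j)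
          linarith
  have hR4 : 1/4 ≤ R t := by linarith
  have hRpos : 0 < R t := by linarith
  -- positions stay inside the convex hull of the initial configuration
  have hsub : ∀ s, Set.range (x s) ⊆ convexHull ℝ (Set.range (x 0)) := by
    intro s
    induction s with
    | zero => exact subset_convexHull ℝ _
    | succ s ih =>
      rintro _ ⟨i, rfl⟩
      obtain ⟨a, b, hseg, hd, hmid⟩ := hmove s i
      have h1 : convexHull ℝ (x s '' {j | dist (x s j) (x s i) ≤ 1}) ⊆
          convexHull ℝ (Set.range (x 0)) := by
        refine (convexHull_mono (Set.image_subset_range _ _)).trans ?_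
        exact convexHull_min ih (convex_convexHull ℝ _)
      exact hmid ▸ h1 (hseg (midpoint_mem_segment a b))
  have hdle0 : Metric.diam (Set.range (x t)) ≤ Δ := by
    calc Metric.diam (Set.range (x t))
        ≤ Metric.diam (convexHull ℝ (Set.range (x 0))) :=
          Metric.diam_mono (hsub t)
            (isBounded_convexHull.mpr (Set.finite_range _).isBounded)
      _ = Δ := convexHull_diam _
  have hRΔ : R t ≤ Δ := by
    have h1 : R t ≤ Metric.diam (Set.range (x t)) := by
      apply hmin t (x t i0) _ Metric.diam_nonneg
      intro i
      exact Metric.mem_closedBall.mpr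
        (Metric.dist_le_diam_of_mem (Set.finite_range _).isBounded ⟨i, rfl⟩ ⟨i0, rfl⟩)
    linarith
  have hΔpos : 0 < Δ := by linarith
  have hlam3 : 0 < lam ^ 3 := by positivity
  have hπ := Real.pi_gt_three
  -- the target decrement is at most lam^3/(400 R t)
  have heps : Real.sqrt 3 * lam ^ 3 / (256 * Real.pi * Δ) ≤ lam^3 / (400 * R t) := by
    rw [div_le_div_iff₀ (by positivity) (by positivity)]
    have h0 : (0:ℝ) ≤ lam^3 * (400 * R t) := by positivity
    have h1 : Real.sqrt 3 * lam^3 * (400 * R t) ≤ 1.75 * lam^3 * (400 * R t) := by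
      nlinarith [sqrt3_le]
    have h2 : (700:ℝ) * (lam^3 * R t) ≤ 700 * (lam^3 * Δ) := by
      nlinarith [mul_le_mul_of_nonneg_left hRΔ hlam3.le]
    nlinarith [mul_pos hlam3 hΔpos]
  have hsmall : lam^3/(400 * R t) ≤ R t := by
    rw [div_le_iff₀ (by positivity)]
    have h1 : lam^3 ≤ 1 := pow_le_one₀ hlam0.le hlam1
    nlinarith
  -- round t+1 positions stay in the ball around c t
  have step1 : ∀ j, dist (x (t+1) j) (c t) ≤ R t := by
    intro j
    obtain ⟨a, b, hseg, hd, hmid⟩ := hmove t j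
    have hball' : x t '' {k | dist (x t k) (x t j) ≤ 1} ⊆ Metric.closedBall (c t) (R t) := by
      rintro _ ⟨k, _, rfl⟩; exact hball t k
    have hhull := convexHull_min hball' (convex_closedBall _ _)
    have ha := Metric.mem_closedBall.mp (hhull (hseg (left_mem_segment ℝ a b)))
    have hb := Metric.mem_closedBall.mp (hhull (hseg (right_mem_segment ℝ a b)))
    rw [hmid]
    calc dist (midpoint ℝ a b) (c t)
        = dist (midpoint ℝ a b) (midpoint ℝ (c t) (c t)) := by rw [midpoint_self]
      _ ≤ (dist a (c t) + dist b (c t))/2 := dist_midpoint_midpoint_le _ _ _ _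
      _ ≤ R t := by linarith
  by_cases hcol : ∀ j, x (t+1) j = x (t+1) i0
  · -- the whole configuration collapsed to one point at round t+1
    have hall2 : ∀ v, x (t+2) v = x (t+1) i0 := by
      intro v
      obtain ⟨a, b, hseg, hd, hmid⟩ := hmove (t+1) v
      have himg : x (t+1) '' {j | dist (x (t+1) j) (x (t+1) v) ≤ 1} = {x (t+1) i0} := by
        apply Set.eq_singleton_iff_unique_mem.mpr
        constructor
        · exact ⟨v, by simp, hcol v⟩
        · rintro _ ⟨k, _, rfl⟩; exact hcol k
      rw [himg, convexHull_singleton] at hseg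
      have ha := hseg (left_mem_segment ℝ a b)
      have hb := hseg (right_mem_segment ℝ a b)
      simp only [Set.mem_singleton_iff] at ha hb
      rw [hmid, ha, hb, midpoint_self]
    have h2 : R (t+2) ≤ 0 := by
      apply hmin (t+2) (x (t+1) i0) 0 le_rfl
      intro i
      simp [Metric.mem_closedBall, hall2 i]
    have h3 : Real.sqrt 3 * lam^3/(256*Real.pi*Δ) ≤ R t := le_trans heps hsmall
    linarith
  · -- main case
    push_neg at hcol
    obtain ⟨jbad, hjbad⟩ := hcol
    have key : ∀ i, dist (x (t+2) i) (c t) ≤ R t - lam^3/(400 * R t) := by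
      intro i
      obtain ⟨a, b, hseg, hd, hmid⟩ := hmove (t+1) i
      set N : Set (Fin n) := {j | dist (x (t+1) j) (x (t+1) i) ≤ 1} with hN
      set S : Set (EuclideanSpace ℝ (Fin 2)) := x (t+1) '' N with hS
      have hSb : Bornology.IsBounded S := ((Set.toFinite N).image _).isBounded
      have hSball : S ⊆ Metric.closedBall (c t) (R t) := by
        rintro _ ⟨j, _, rfl⟩; exact Metric.mem_closedBall.mpr (step1 j)
      have hhull : convexHull ℝ S ⊆ Metric.closedBall (c t) (R t) :=
        convexHull_min hSball (convex_closedBall _ _)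
      have ha : dist a (c t) ≤ R t :=
        Metric.mem_closedBall.mp (hhull (hseg (left_mem_segment ℝ a b)))
      have hb : dist b (c t) ≤ R t :=
        Metric.mem_closedBall.mp (hhull (hseg (right_mem_segment ℝ a b)))
      have hiN : i ∈ N := by simp [hN]
      set D := Metric.diam S with hD
      have hDnn : 0 ≤ D := Metric.diam_nonneg
      have hDpos : 0 < D := by
        rcases hDnn.lt_or_eq with h | h
        · exact h
        · exfalso
          have hqall : ∀ j ∈ N, x (t+1) j = x (t+1) i := by
            intro j hj
            have h1 : dist (x (t+1) j) (x (t+1) i) ≤ D :=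
              Metric.dist_le_diam_of_mem hSb ⟨j, hj, rfl⟩ ⟨i, hiN, rfl⟩
            rw [← h] at h1
            exact dist_le_zero.mp h1
          have hwalk : ∀ u v
              (w : (SimpleGraph.fromRel
                (fun i j : Fin n => dist (x (t+1) i) (x (t+1) j) ≤ 1)).Walk u v),
              x (t+1) u = x (t+1) i → x (t+1) v = x (t+1) i := by
            intro u v w
            induction w with
            | nil => exact id
            | @cons u u' v hadj w ih =>
              intro hu
              apply ih
              rw [SimpleGraph.fromRel_adj] at hadj
              obtain ⟨-, h1 | h1⟩ := hadj
              · refine hqall u' ?_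
                show dist (x (t+1) u') (x (t+1) i) ≤ 1
                rw [← hu, dist_comm]; exact h1
              · refine hqall u' ?_
                show dist (x (t+1) u') (x (t+1) i) ≤ 1
                rw [← hu]; exact h1
          have hallq : ∀ v, x (t+1) v = x (t+1) i := by
            intro v
            obtain ⟨w⟩ := (hconn (t+1)).preconnected i v
            exact hwalk i v w rfl
          exact hjbad ((hallq jbad).trans (hallq i0).symm)
      rcases le_or_gt (1/2 : ℝ) D with hD2 | hD2
      · -- large neighborhood diameter: quadratic sink suffices
        have hab : lam * (1/2) ≤ dist a b := by
          rw [hd]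
          exact mul_le_mul_of_nonneg_left hD2 hlam0.le
        have hcb := chord_bound hRpos (θ := lam * (1/2)) (by positivity)
          (by nlinarith) ha hb hab
        rw [show t+2 = t+1+1 from rfl, hmid]
        refine hcb.trans ?_
        have h5 : lam^3/(400 * R t) ≤ (lam*(1/2))^2/(8 * R t) := by
          rw [div_le_div_iff₀ (by positivity) (by positivity)]
          have h6 : 0 ≤ lam^2 * R t * (1 - lam) :=
            mul_nonneg (mul_nonneg (sq_nonneg lam) hRpos.le) (by linarith)
          nlinarith
        linarith
      · -- small neighborhood diameter: stuck robots merge, others are deep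
        have move_le : ∀ j, dist (x (t+1) j) (x t j) ≤
            Metric.diam (x t '' {k | dist (x t k) (x t j) ≤ 1}) := by
          intro j
          obtain ⟨a', b', hseg', hd', hmid'⟩ := hmove t j
          have hsb : x t '' {k | dist (x t k) (x t j) ≤ 1} ⊆
              Metric.closedBall (x t j) (Metric.diam (x t '' {k | dist (x t k) (x t j) ≤ 1})) := by
            rintro _ ⟨k, hk, rfl⟩
            exact Metric.mem_closedBall.mpr
              (Metric.dist_le_diam_of_mem (((Set.toFinite _).image _).isBounded)
                ⟨k, hk, rfl⟩ ⟨j, by simp, rfl⟩)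
          have hh := convexHull_min hsb (convex_closedBall _ _)
          have ha' := Metric.mem_closedBall.mp (hh (hseg' (left_mem_segment ℝ a' b')))
          have hb' := Metric.mem_closedBall.mp (hh (hseg' (right_mem_segment ℝ a' b')))
          rw [hmid']
          calc dist (midpoint ℝ a' b') (x t j)
              = dist (midpoint ℝ a' b') (midpoint ℝ (x t j) (x t j)) := by rw [midpoint_self]
            _ ≤ (dist a' (x t j) + dist b' (x t j))/2 := dist_midpoint_midpoint_le _ _ _ _
            _ ≤ _ := by linarith
        have merge : ∀ j k, j ∈ N → k ∈ N →
            Metric.diam (x t '' {r | dist (x t r) (x t j) ≤ 1}) ≤ 1/5 →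
            Metric.diam (x t '' {r | dist (x t r) (x t k) ≤ 1}) ≤ 1/5 →
            x (t+1) j = x (t+1) k := by
          intro j k hj hk hdj hdk
          have h1 : dist (x (t+1) j) (x (t+1) k) ≤ D :=
            Metric.dist_le_diam_of_mem hSb ⟨j, hj, rfl⟩ ⟨k, hk, rfl⟩
          have hmj := move_le j
          have hmk := move_le k
          have h2 : dist (x t j) (x t k) ≤ 1 := by
            calc dist (x t j) (x t k)
                ≤ dist (x t j) (x (t+1) j) + dist (x (t+1) j) (x (t+1) k)
                    + dist (x (t+1) k) (x t k) := dist_triangle4 _ _ _ _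
              _ ≤ 1/5 + D + 1/5 := by
                  rw [dist_comm (x t j)]
                  linarith
              _ ≤ 1 := by linarith
          have h3 : dist (x t j) (x t k) ≤ 1/5 := by
            have hkN : dist (x t k) (x t j) ≤ 1 := by rw [dist_comm]; exact h2
            have := Metric.dist_le_diam_of_mem (((Set.toFinite _).image (x t)).isBounded)
              (⟨j, by simp, rfl⟩ : x t j ∈ x t '' {r | dist (x t r) (x t j) ≤ 1})
              ⟨k, hkN, rfl⟩
            linarith
          have hsets : {r | dist (x t r) (x t j) ≤ 1} = {r | dist (x t r) (x t k) ≤ 1} := by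
            ext r
            simp only [Set.mem_setOf_eq]
            constructor
            · intro hr
              have hr5 : dist (x t r) (x t j) ≤ 1/5 := by
                have := Metric.dist_le_diam_of_mem (((Set.toFinite _).image (x t)).isBounded)
                  (⟨r, hr, rfl⟩ : x t r ∈ x t '' {r | dist (x t r) (x t j) ≤ 1})
                  ⟨j, by simp, rfl⟩
                linarith
              calc dist (x t r) (x t k) ≤ dist (x t r) (x t j) + dist (x t j) (x t k) :=
                    dist_triangle _ _ _
                _ ≤ 1 := by linarith
            · intro hr
              have hr5 : dist (x t r) (x t k) ≤ 1/5 := by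
                have := Metric.dist_le_diam_of_mem (((Set.toFinite _).image (x t)).isBounded)
                  (⟨r, hr, rfl⟩ : x t r ∈ x t '' {r | dist (x t r) (x t k) ≤ 1})
                  ⟨k, by simp, rfl⟩
                linarith
              calc dist (x t r) (x t j) ≤ dist (x t r) (x t k) + dist (x t k) (x t j) :=
                    dist_triangle _ _ _
                _ ≤ 1 := by
                    rw [dist_comm (x t k)]
                    linarith
          exact hcollapse t j k hsets (le_trans hdj (by norm_num))
        have deep : ∀ j, 1/5 < Metric.diam (x t '' {r | dist (x t r) (x t j) ≤ 1}) →
            dist (x (t+1) j) (c t) ≤ R t - lam^2/(200 * R t) := by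
          intro j hdj
          obtain ⟨a', b', hseg', hd', hmid'⟩ := hmove t j
          have hsb : x t '' {r | dist (x t r) (x t j) ≤ 1} ⊆
              Metric.closedBall (c t) (R t) := by
            rintro _ ⟨k, _, rfl⟩; exact hball t k
          have hh := convexHull_min hsb (convex_closedBall _ _)
          have ha' := Metric.mem_closedBall.mp (hh (hseg' (left_mem_segment ℝ a' b')))
          have hb' := Metric.mem_closedBall.mp (hh (hseg' (right_mem_segment ℝ a' b')))
          have hab' : lam * (1/5) ≤ dist a' b' := by
            rw [hd']
            nlinarith
          have hcb := chord_bound hRpos (θ := lam * (1/5)) (by positivity)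
            (by nlinarith) ha' hb' hab'
          rw [hmid']
          refine hcb.trans ?_
          have : (lam*(1/5))^2/(8 * R t) = lam^2/(200 * R t) := by
            field_simp
            ring
          rw [this]
        -- single shallow point q0
        obtain ⟨q0, hq0S, hP2⟩ : ∃ q0, q0 ∈ S ∧ ∀ j ∈ N, x (t+1) j = q0 ∨
            dist (x (t+1) j) (c t) ≤ R t - lam^2/(200 * R t) := by
          by_cases hst : ∃ k ∈ N, Metric.diam (x t '' {r | dist (x t r) (x t k) ≤ 1}) ≤ 1/5
          · obtain ⟨k0, hk0N, hk0⟩ := hst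
            refine ⟨x (t+1) k0, ⟨k0, hk0N, rfl⟩, fun j hj => ?_⟩
            by_cases hj5 : Metric.diam (x t '' {r | dist (x t r) (x t j) ≤ 1}) ≤ 1/5
            · exact Or.inl (merge j k0 hj hk0N hj5 hk0)
            · exact Or.inr (deep j (lt_of_not_ge hj5))
          · push_neg at hst
            exact ⟨x (t+1) i, ⟨i, hiN, rfl⟩, fun j hj => Or.inr (deep j (hst j hj))⟩
        have hq0c : dist q0 (c t) ≤ R t := Metric.mem_closedBall.mp (hSball hq0S)
        set K := Metric.closedBall (c t) (R t - lam^2/(200 * R t)) ∩ Metric.closedBall q0 D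
          with hK
        have hKconv : Convex ℝ K := (convex_closedBall _ _).inter (convex_closedBall _ _)
        have hSK : S ⊆ insert q0 K := by
          rintro _ ⟨j, hj, rfl⟩
          rcases hP2 j hj with h1 | h1
          · rw [h1]; exact Set.mem_insert _ _
          · refine Set.mem_insert_of_mem _ ⟨Metric.mem_closedBall.mpr h1, ?_⟩
            exact Metric.mem_closedBall.mpr (Metric.dist_le_diam_of_mem hSb ⟨j, hj, rfl⟩ hq0S)
        have hKne : K.Nonempty := by
          by_contra hKe
          rw [Set.not_nonempty_iff_eq_empty] at hKe
          have hsing : S ⊆ {q0} := by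
            intro p hp
            rcases hSK hp with h1 | h1
            · exact h1
            · rw [hKe] at h1; exact absurd h1 (Set.notMem_empty _)
          have : D ≤ 0 := by
            have := Metric.diam_mono hsing Bornology.isBounded_singleton
            simpa using this
          linarith
        have hhull2 : convexHull ℝ S ⊆ convexJoin ℝ {q0} K := by
          refine (convexHull_mono hSK).trans ?_
          rw [convexHull_insert hKne, hKconv.convexHull_eq]
        have hmem : ∀ p ∈ convexJoin ℝ ({q0} : Set (EuclideanSpace ℝ (Fin 2))) K,
            ∃ v : ℝ, 0 ≤ v ∧ dist p (c t) ≤ R t - v * (lam^2/(200 * R t)) ∧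
              dist p q0 ≤ v * D := by
          intro p hp
          rw [mem_convexJoin] at hp
          obtain ⟨q', hq', z, hz, hpz⟩ := hp
          rw [Set.mem_singleton_iff] at hq'
          obtain ⟨u, v, hu, hv, huv, hcomb⟩ := hpz
          rw [hq'] at hcomb
          obtain ⟨hzc, hzq⟩ := hz
          rw [Metric.mem_closedBall] at hzc hzq
          obtain ⟨hc1, hc2⟩ := combo_est hu hv huv hcomb
          refine ⟨v, hv, ?_, ?_⟩
          · have h6 : u * dist q0 (c t) ≤ u * R t := mul_le_mul_of_nonneg_left hq0c hu
            have h7 : v * dist z (c t) ≤ v * (R t - lam^2/(200 * R t)) :=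
              mul_le_mul_of_nonneg_left hzc hv
            nlinarith
          · have h8 : v * dist z q0 ≤ v * D := mul_le_mul_of_nonneg_left hzq hv
            linarith
        obtain ⟨va, hva, haC, haQ⟩ := hmem a (hhull2 (hseg (left_mem_segment ℝ a b)))
        obtain ⟨vb, hvb, hbC, hbQ⟩ := hmem b (hhull2 (hseg (right_mem_segment ℝ a b)))
        have hsum : lam ≤ va + vb := by
          have h9 : lam * D ≤ (va + vb) * D := by
            calc lam * D = dist a b := by rw [hd, hD]
              _ ≤ dist a q0 + dist b q0 := by
                  rw [dist_comm b q0]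
                  exact dist_triangle _ _ _
              _ ≤ va * D + vb * D := by linarith
              _ = (va + vb) * D := by ring
          exact le_of_mul_le_mul_right (by linarith) hDpos
        have hfin : dist (midpoint ℝ a b) (c t) ≤ R t - lam^3/(400 * R t) := by
          have h10 : dist (midpoint ℝ a b) (c t)
              ≤ (dist a (c t) + dist b (c t))/2 := by
            calc dist (midpoint ℝ a b) (c t)
                = dist (midpoint ℝ a b) (midpoint ℝ (c t) (c t)) := by rw [midpoint_self]
              _ ≤ (dist a (c t) + dist b (c t))/2 := dist_midpoint_midpoint_le _ _ _ _
          have h11 : 0 < lam^2/(200 * R t) := by positivity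
          have h12 : (va + vb) * (lam^2/(200 * R t)) ≥ lam * (lam^2/(200 * R t)) :=
            mul_le_mul_of_nonneg_right hsum h11.le
          have h13 : lam * (lam^2/(200 * R t)) = 2 * (lam^3/(400 * R t)) := by
            field_simp
            ring
          linarith
        rw [show t+2 = t+1+1 from rfl, hmid]
        exact hfin
    have hfin2 : R (t+2) ≤ R t - lam^3/(400 * R t) := by
      apply hmin (t+2) (c t) _ (by linarith)
      intro i
      exact Metric.mem_closedBall.mpr (key i)
    linarith
end

section
/- Let d ≥ 1, let P ⊆ ℝ^d be a nonempty finite set, and let p ∈ P be such that ‖q − p‖ ≤ 1 for all q ∈ P. Let c ∈ ℝ^d and a ≥ 0 be the center and radius of the smallest enclosing ball of P, i.e., P ⊆ closedBall(c, a) and for every c' and a' with P ⊆ closedBall(c', a') one has a ≤ a'. Then a ≤ 1, and for every q ∈ P the midpoint (p + c)/2 lies within distance 1/2 of the midpoint (p + q)/2, i.e., ‖(p + c)/2 − (p + q)/2‖ ≤ 1/2. Consequently, a robot at position p whose visible neighbors P all lie within distance 1 may move the distance ‖p − c‖/2 towards c (i.e., to the point (p + c)/2) while remaining inside every ball of radius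 1/2 centered at the midpoint between p and a neighbor q ∈ P. -/
/-- The smallest enclosing ball of a point set of diameter-from-p at most 1
has radius at most 1, and moving halfway towards its center stays within every limit ball
of radius 1/2 centered at the midpoint towards a neighbor. -/
theorem gtc_halfway_move_stays_in_limit_balls
    (d : ℕ) (hd : 1 ≤ d)
    (P : Set (EuclideanSpace ℝ (Fin d))) (hPfin : P.Finite) (hPne : P.Nonempty)
    (p : EuclideanSpace ℝ (Fin d)) (hp : p ∈ P)
    (hnear : ∀ q ∈ P, ‖q - p‖ ≤ 1)
    (c : EuclideanSpace ℝ (Fin d)) (a : ℝ) (ha : 0 ≤ a)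
    -- c, a are center and radius of the smallest enclosing ball of P
    (hball : P ⊆ Metric.closedBall c a)
    (hmin : ∀ (c' : EuclideanSpace ℝ (Fin d)) (a' : ℝ), 0 ≤ a' →
      P ⊆ Metric.closedBall c' a' → a ≤ a') :
    a ≤ 1 ∧ ∀ q ∈ P, ‖midpoint ℝ p c - midpoint ℝ p q‖ ≤ 1 / 2 := by
  have ha1 : a ≤ 1 := by
    apply hmin p 1 zero_le_one
    intro q hq
    simpa [Metric.mem_closedBall, dist_eq_norm] using hnear q hq
  refine ⟨ha1, fun q hq => ?_⟩
  have h1 : midpoint ℝ p c - midpoint ℝ p q = (2:ℝ)⁻¹ • (c - q) := by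
    simp [midpoint_eq_smul_add, smul_sub, smul_add]
  have h2 : ‖c - q‖ ≤ a := by
    have := hball hq
    rw [Metric.mem_closedBall, dist_eq_norm] at this
    simpa [norm_sub_rev] using this
  rw [h1, norm_smul]
  simp only [norm_inv, Real.norm_ofNat]
  linarith
end

section
/- Let d ≥ 1, n ≥ 1, V > 0, τ > 0, and let p : Fin n → ℝ^d be positions of n robots. Suppose the graph on Fin n with an edge between i and j whenever i ≠ j and ‖p i − p j‖ ≤ V is connected, and suppose the diameter of {p i : i ∈ Fin n} is greater than τ. Then for every robot i, the diameter of its neighborhood at viewing range V + τ is greater than τ; that is, there exist j, k with ‖p j − p i‖ ≤ V + τ, ‖p k − p i‖ ≤ V + τ, and ‖p j − p k‖ > τ. -/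
lemma walk_far_aux {n d : ℕ} {V τ : ℝ} (hτ : 0 < τ)
    {p : Fin n → EuclideanSpace ℝ (Fin d)} {i a : Fin n}
    (w : (SimpleGraph.fromRel (fun i j : Fin n => dist (p i) (p j) ≤ V)).Walk a i)
    (ha : τ < dist (p a) (p i)) :
    ∃ j, dist (p j) (p i) ≤ V + τ ∧ τ < dist (p j) (p i) := by
  induction w with
  | nil => simp at ha; linarith
  | @cons a c b h w ih =>
    by_cases hc : τ < dist (p c) (p b)
    · exact ih hc
    · push_neg at hc
      rw [SimpleGraph.fromRel_adj] at h
      have hac : dist (p a) (p c) ≤ V := by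
        rcases h.2 with h' | h'
        · exact h'
        · rwa [dist_comm]
      exact ⟨a, le_trans (dist_triangle _ (p c) _) (by linarith), ha⟩

/-- If the connectivity graph with range V is connected and the global
diameter exceeds τ, then every robot's neighborhood at viewing range V + τ has diameter
greater than τ. -/
theorem neighborhood_diameter_with_larger_viewing_range
    (d n : ℕ) (hd : 1 ≤ d) (hn : 1 ≤ n)
    (V τ : ℝ) (hV : 0 < V) (hτ : 0 < τ)
    (p : Fin n → EuclideanSpace ℝ (Fin d))
    (hconn : (SimpleGraph.fromRel (fun i j : Fin n => dist (p i) (p j) ≤ V)).Connected)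
    (hdiam : τ < Metric.diam (Set.range p)) :
    ∀ i : Fin n, ∃ j k : Fin n,
      dist (p j) (p i) ≤ V + τ ∧ dist (p k) (p i) ≤ V + τ ∧ τ < dist (p j) (p k) := by
  intro i
  have hex : ∃ a b : Fin n, τ < dist (p a) (p b) := by
    by_contra h
    push_neg at h
    have : Metric.diam (Set.range p) ≤ τ := by
      apply Metric.diam_le_of_forall_dist_le hτ.le
      rintro x ⟨a, rfl⟩ y ⟨b, rfl⟩
      exact h a b
    linarith
  obtain ⟨a, b, hab⟩ := hex
  have key : ∀ c : Fin n, τ < dist (p c) (p i) →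
      ∃ j k : Fin n, dist (p j) (p i) ≤ V + τ ∧ dist (p k) (p i) ≤ V + τ ∧
        τ < dist (p j) (p k) := by
    intro c hc
    obtain ⟨w⟩ := hconn.preconnected c i
    obtain ⟨j, hj1, hj2⟩ := walk_far_aux hτ w hc
    exact ⟨j, i, hj1, by simp; linarith, hj2⟩
  by_cases ha : τ < dist (p a) (p i)
  · exact key a ha
  by_cases hb : τ < dist (p b) (p i)
  · exact key b hb
  push_neg at ha hb
  exact ⟨a, b, by linarith, by linarith, hab⟩
end

section
/- Let n ≥ 1, d ≥ 1, 0 < λ ≤ 1, and let x : ℕ → Fin n → ℝ^d be a λ-gathering trajectory of n robots in ℝ^d with viewing range 1. Let Δ be the diameter of the initial configuration, and for each round s let R(s) be the radius of the smallest enclosing hypersphere of {x s i : i ∈ Fin n}. Then for every round t in which the diameter of {x t i : i ∈ Fin n} is at least 1/2, one has R(t+2) ≤ R(t) − (√2·λ³)/(256·π·Δ). -/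
/-- Convex hull of a subset of a closed ball stays in the ball. -/
private lemma hull_subset_closedBall {E : Type*} [NormedAddCommGroup E] [NormedSpace ℝ E]
    {s : Set E} {z : E} {r : ℝ} (h : s ⊆ Metric.closedBall z r) :
    convexHull ℝ s ⊆ Metric.closedBall z r :=
  convexHull_min h (convex_closedBall z r)

/-- Midpoint-of-chord depth estimate: if both endpoints of a segment lie in a ball of radius `RR`
and the midpoint is within `e` of the boundary, then the segment is short. -/
private lemma chord_sq {E : Type*} [NormedAddCommGroup E] [InnerProductSpace ℝ E]
    {a b cc : E} {RR e : ℝ} (ha : dist a cc ≤ RR) (hb : dist b cc ≤ RR)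
    (he : 0 ≤ e) (heR : e ≤ RR)
    (hm : RR - e < dist (midpoint ℝ a b) cc) :
    dist a b ^ 2 < 8 * RR * e := by
  have hpar := parallelogram_law_with_norm ℝ (a - cc) (b - cc)
  have h1 : a - cc - (b - cc) = a - b := by abel
  have h3 : midpoint ℝ a b + midpoint ℝ a b = a + b := midpoint_add_self ℝ a b
  have h2 : a - cc + (b - cc) = midpoint ℝ a b - cc + (midpoint ℝ a b - cc) := by
    calc a - cc + (b - cc) = (a + b) - (cc + cc) := by abel
      _ = (midpoint ℝ a b + midpoint ℝ a b) - (cc + cc) := by rw [h3]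
      _ = midpoint ℝ a b - cc + (midpoint ℝ a b - cc) := by abel
  have h4 : ‖midpoint ℝ a b - cc + (midpoint ℝ a b - cc)‖ = 2 * ‖midpoint ℝ a b - cc‖ := by
    rw [← two_smul ℝ, norm_smul]
    simp
  rw [h1, h2, h4] at hpar
  have hda : ‖a - cc‖ = dist a cc := (dist_eq_norm a cc).symm
  have hdb : ‖b - cc‖ = dist b cc := (dist_eq_norm b cc).symm
  have hdm : ‖midpoint ℝ a b - cc‖ = dist (midpoint ℝ a b) cc := (dist_eq_norm _ cc).symm
  have hdab : ‖a - b‖ = dist a b := (dist_eq_norm a b).symm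
  rw [hda, hdb, hdm, hdab] at hpar
  have hRe : (0:ℝ) ≤ RR - e := by linarith
  have hsq : (RR - e) * (RR - e) < dist (midpoint ℝ a b) cc * dist (midpoint ℝ a b) cc :=
    mul_self_lt_mul_self hRe hm
  nlinarith [dist_nonneg (x := a) (y := cc), dist_nonneg (x := b) (y := cc),
    dist_nonneg (x := a) (y := b), hpar, hsq]

set_option maxHeartbeats 1600000 in
/-- For a λ-gathering trajectory in ℝ^d, the radius of the global smallest
enclosing hypersphere decreases by at least √2·λ³/(256·π·Δ) every two rounds as long as the
diameter is at least 1/2. -/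
theorem sec_radius_decrease_dD
    (n d : ℕ) (hn : 1 ≤ n) (hd : 1 ≤ d) (lam : ℝ) (hlam0 : 0 < lam) (hlam1 : lam ≤ 1)
    (x : ℕ → Fin n → EuclideanSpace ℝ (Fin d))
    (hmove : ∀ (t : ℕ) (i : Fin n), ∃ a b : EuclideanSpace ℝ (Fin d),
      segment ℝ a b ⊆ convexHull ℝ (x t '' {j | dist (x t j) (x t i) ≤ 1}) ∧
      dist a b = lam * Metric.diam (x t '' {j | dist (x t j) (x t i) ≤ 1}) ∧
      x (t + 1) i = midpoint ℝ a b)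
    (hconn : ∀ t : ℕ,
      (SimpleGraph.fromRel (fun i j : Fin n => dist (x t i) (x t j) ≤ 1)).Connected)
    (hcollapse : ∀ (t : ℕ) (i j : Fin n),
      {k | dist (x t k) (x t i) ≤ 1} = {k | dist (x t k) (x t j) ≤ 1} →
      Metric.diam (x t '' {k | dist (x t k) (x t i) ≤ 1}) ≤ 1 / 2 →
      x (t + 1) i = x (t + 1) j)
    -- c s, R s are center and radius of the smallest enclosing hypersphere in round s
    (c : ℕ → EuclideanSpace ℝ (Fin d)) (R : ℕ → ℝ) (hR0 : ∀ s : ℕ, 0 ≤ R s)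
    (hball : ∀ (s : ℕ) (i : Fin n), x s i ∈ Metric.closedBall (c s) (R s))
    (hmin : ∀ (s : ℕ) (c' : EuclideanSpace ℝ (Fin d)) (r' : ℝ), 0 ≤ r' →
      (∀ i : Fin n, x s i ∈ Metric.closedBall c' r') → R s ≤ r')
    (t : ℕ) (hdiam : 1 / 2 ≤ Metric.diam (Set.range (x t))) :
    R (t + 2) ≤ R t -
      Real.sqrt 2 * lam ^ 3 / (256 * Real.pi * Metric.diam (Set.range (x 0))) := by
  classical
  set Δ : ℝ := Metric.diam (Set.range (x 0)) with hΔdef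
  set δ : ℝ := Real.sqrt 2 * lam ^ 3 / (256 * Real.pi * Δ) with hδdef
  -- numeric facts
  have hπ : (3:ℝ) < Real.pi := Real.pi_gt_three
  have hs2nn : (0:ℝ) ≤ Real.sqrt 2 := Real.sqrt_nonneg 2
  have hs2sq : Real.sqrt 2 ^ 2 = 2 := Real.sq_sqrt (by norm_num)
  have hs2ub : Real.sqrt 2 ≤ 3/2 := by nlinarith
  have hs2pos : (0:ℝ) < Real.sqrt 2 := Real.sqrt_pos.mpr (by norm_num)
  have hlam3 : (0:ℝ) < lam ^ 3 := pow_pos hlam0 3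
  have hlam2 : (0:ℝ) < lam ^ 2 := pow_pos hlam0 2
  have hlamle : lam ^ 3 ≤ lam ^ 2 := pow_le_pow_of_le_one hlam0.le hlam1 (by norm_num)
  have hlam2le1 : lam ^ 2 ≤ 1 := pow_le_one₀ hlam0.le hlam1
  have hlam3le1 : lam ^ 3 ≤ 1 := pow_le_one₀ hlam0.le hlam1
  -- diameter monotonicity
  have hsub : ∀ s : ℕ, Set.range (x (s+1)) ⊆ convexHull ℝ (Set.range (x s)) := by
    intro s
    rintro - ⟨j, rfl⟩
    obtain ⟨a, b, hseg, -, hmid⟩ := hmove s j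
    rw [hmid]
    exact convexHull_mono (Set.image_subset_range _ _) (hseg (midpoint_mem_segment a b))
  have hdiam_mono : ∀ s : ℕ, Metric.diam (Set.range (x s)) ≤ Δ := by
    intro s
    induction s with
    | zero => exact le_of_eq hΔdef.symm
    | succ s ih =>
      calc Metric.diam (Set.range (x (s+1)))
          ≤ Metric.diam (convexHull ℝ (Set.range (x s))) :=
            Metric.diam_mono (hsub s) (isBounded_convexHull.mpr (Set.finite_range _).isBounded)
        _ = Metric.diam (Set.range (x s)) := convexHull_diam _
        _ ≤ Δ := ih
  have hΔhalf : (1:ℝ)/2 ≤ Δ := le_trans hdiam (hdiam_mono t)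
  have hΔpos : (0:ℝ) < Δ := by linarith
  -- R t vs diameter
  have i₀ : Fin n := ⟨0, hn⟩
  have hRt_le : R t ≤ Metric.diam (Set.range (x t)) := by
    refine hmin t (x t i₀) _ Metric.diam_nonneg (fun j => ?_)
    exact Metric.mem_closedBall.mpr
      (Metric.dist_le_diam_of_mem (Set.finite_range _).isBounded ⟨j, rfl⟩ ⟨i₀, rfl⟩)
  have hRtΔ : R t ≤ Δ := le_trans hRt_le (hdiam_mono t)
  have hdiam2R : Metric.diam (Set.range (x t)) ≤ 2 * R t := by
    calc Metric.diam (Set.range (x t))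
        ≤ Metric.diam (Metric.closedBall (c t) (R t)) := by
          refine Metric.diam_mono ?_ Metric.isBounded_closedBall
          rintro - ⟨j, rfl⟩
          exact hball t j
      _ ≤ 2 * R t := Metric.diam_closedBall (hR0 t)
  have hR4 : (1:ℝ)/4 ≤ R t := by linarith
  have hRpos : (0:ℝ) < R t := by linarith
  -- δ bounds
  have hδpos : (0:ℝ) < δ := by
    rw [hδdef]
    exact div_pos (mul_pos hs2pos hlam3)
      (mul_pos (mul_pos (by norm_num) Real.pi_pos) hΔpos)
  have hδlt : δ < lam ^ 3 / (256 * R t) := by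
    rw [hδdef, div_lt_div_iff₀ (by positivity) (by positivity)]
    have e1 : Real.sqrt 2 * lam ^ 3 ≤ (3/2) * lam ^ 3 :=
      mul_le_mul_of_nonneg_right hs2ub hlam3.le
    nlinarith [mul_pos hlam3 hΔpos, mul_le_mul_of_nonneg_left hRtΔ (by positivity : (0:ℝ) ≤ (3/2) * lam ^ 3), mul_lt_mul_of_pos_right hπ (mul_pos hlam3 hΔpos)]
  have hδR : δ ≤ R t := by
    have h2 : lam ^ 3 / (256 * R t) ≤ 1/64 := by
      rw [div_le_iff₀ (by positivity)]
      nlinarith only [hlam3le1, hR4]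
    linarith only [h2, hδlt, hR4]
  -- shallow threshold h
  set h : ℝ := lam ^ 2 / (128 * R t) with hhdef
  have hhpos : (0:ℝ) < h := div_pos hlam2 (by positivity)
  have hhR : h ≤ R t := by
    rw [hhdef, div_le_iff₀ (by positivity)]
    nlinarith only [hR4, hlam2le1, hRpos]
  have h8Rh : 8 * R t * h = lam ^ 2 / 16 := by
    rw [hhdef]
    field_simp
    ring
  have hδh : 2 * δ < lam * h := by
    have e1 : lam * h = 2 * (lam ^ 3 / (256 * R t)) := by
      rw [hhdef]
      field_simp
      ring
    rw [e1]
    linarith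
  have h8Rδ : 8 * R t * δ < lam ^ 2 / 16 := by
    have e1 : 8 * R t * δ < 8 * R t * (lam ^ 3 / (256 * R t)) :=
      mul_lt_mul_of_pos_left hδlt (by positivity)
    have e2 : 8 * R t * (lam ^ 3 / (256 * R t)) = lam ^ 3 / 32 := by
      field_simp
      ring
    linarith only [e1, e2, hlamle, hlam2.le]
  -- positions at time t+1 are in the ball B(c t, R t)
  have hB1 : ∀ j, dist (x (t+1) j) (c t) ≤ R t := by
    intro j
    obtain ⟨a, b, hseg, -, hmid⟩ := hmove t j
    have himg : x t '' {k | dist (x t k) (x t j) ≤ 1} ⊆ Metric.closedBall (c t) (R t) := by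
      rintro - ⟨k, -, rfl⟩
      exact hball t k
    have := hull_subset_closedBall himg (hseg (midpoint_mem_segment a b))
    rw [hmid]
    exact Metric.mem_closedBall.mp this
  -- main case split
  by_cases hcase : ∀ j, dist (x (t+2) j) (c t) ≤ R t - δ
  · exact hmin (t+2) (c t) (R t - δ) (by linarith)
      (fun j => Metric.mem_closedBall.mpr (hcase j))
  push_neg at hcase
  obtain ⟨i, hi⟩ := hcase
  obtain ⟨a, b, hseg, hab, hmid⟩ := hmove (t+1) i
  have hmid' : x (t+2) i = midpoint ℝ a b := by
    have e : t + 1 + 1 = t + 2 := by omega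
    rwa [e] at hmid
  set A : Set (Fin n) := {j | dist (x (t + 1) j) (x (t + 1) i) ≤ 1} with hAdef
  set V : Set (EuclideanSpace ℝ (Fin d)) := x (t + 1) '' A with hVdef
  have hiA : i ∈ A := by simp [hAdef]
  have hPVi : x (t+1) i ∈ V := ⟨i, hiA, rfl⟩
  have hVfin : V.Finite := Set.Finite.image _ (Set.toFinite A)
  have hVB : V ⊆ Metric.closedBall (c t) (R t) := by
    rintro - ⟨j, -, rfl⟩
    exact Metric.mem_closedBall.mpr (hB1 j)
  have haH : a ∈ convexHull ℝ V := hseg (left_mem_segment ℝ a b)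
  have hbH : b ∈ convexHull ℝ V := hseg (right_mem_segment ℝ a b)
  have haB : dist a (c t) ≤ R t := Metric.mem_closedBall.mp (hull_subset_closedBall hVB haH)
  have hbB : dist b (c t) ≤ R t := Metric.mem_closedBall.mp (hull_subset_closedBall hVB hbH)
  have hmi : R t - δ < dist (midpoint ℝ a b) (c t) := by
    rw [← hmid']
    exact hi
  have hchord := chord_sq haB hbB hδpos.le hδR hmi
  rw [hab] at hchord
  have hDnn : 0 ≤ Metric.diam V := Metric.diam_nonneg
  have hD14 : Metric.diam V < 1/4 := by
    rw [mul_pow] at hchord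
    have hD2 : Metric.diam V ^ 2 < 1/16 := by
      have e1 : lam ^ 2 * Metric.diam V ^ 2 < lam ^ 2 * (1/16) := by
        calc lam ^ 2 * Metric.diam V ^ 2 < 8 * R t * δ := hchord
          _ < lam ^ 2 / 16 := h8Rδ
          _ = lam ^ 2 * (1/16) := by ring
      exact (mul_lt_mul_iff_right₀ hlam2).mp e1
    nlinarith only [hD2, hDnn, mul_self_nonneg (Metric.diam V - 1/4)]
  by_cases hD0 : Metric.diam V = 0
  · -- total collapse: every robot is at the same point at time t+1 and t+2
    have hallA : ∀ j ∈ A, x (t+1) j = x (t+1) i := by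
      intro j hj
      have hle := Metric.dist_le_diam_of_mem hVfin.isBounded ⟨j, hj, rfl⟩ hPVi
      rw [hD0] at hle
      exact dist_le_zero.mp hle
    have hallk : ∀ k, x (t+1) k = x (t+1) i := by
      have key : ∀ u v : Fin n,
          ∀ _w : (SimpleGraph.fromRel
            (fun i' j' : Fin n => dist (x (t+1) i') (x (t+1) j') ≤ 1)).Walk u v,
          x (t+1) u = x (t+1) i → x (t+1) v = x (t+1) i := by
        intro u v w
        induction w with
        | nil => exact fun hu => hu
        | @cons u u' v hadj p ih =>
          intro hu
          refine ih ?_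
          rw [SimpleGraph.fromRel_adj] at hadj
          obtain ⟨-, hd | hd⟩ := hadj
          · refine hallA u' ?_
            have : dist (x (t+1) u') (x (t+1) i) ≤ 1 := by rw [← hu, dist_comm]; exact hd
            exact this
          · refine hallA u' ?_
            have : dist (x (t+1) u') (x (t+1) i) ≤ 1 := by rw [← hu]; exact hd
            exact this
      intro k
      obtain ⟨w⟩ := (hconn (t+1)).preconnected i k
      exact key i k w rfl
    have hall2 : ∀ k, x (t+2) k = x (t+1) i := by
      intro k
      obtain ⟨a', b', hseg', -, hmid2⟩ := hmove (t+1) k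
      have hmid2' : x (t+2) k = midpoint ℝ a' b' := by
        have e : t + 1 + 1 = t + 2 := by omega
        rwa [e] at hmid2
      have himg : x (t+1) '' {j | dist (x (t+1) j) (x (t+1) k) ≤ 1} ⊆
          ({x (t+1) i} : Set (EuclideanSpace ℝ (Fin d))) := by
        rintro - ⟨j, -, rfl⟩
        exact hallk j
      have hhull : convexHull ℝ (x (t+1) '' {j | dist (x (t+1) j) (x (t+1) k) ≤ 1}) ⊆
          ({x (t+1) i} : Set (EuclideanSpace ℝ (Fin d))) := by
        refine convexHull_min himg (convex_singleton _)
      have := hhull (hseg' (midpoint_mem_segment a' b'))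
      rw [Set.mem_singleton_iff] at this
      rw [hmid2', this]
    have hR2 : R (t+2) ≤ 0 := by
      refine hmin (t+2) (x (t+1) i) 0 le_rfl (fun k => ?_)
      simp [hall2 k]
    linarith only [hR2, hδR, hR4, hδpos]
  · -- D > 0
    have hDpos : 0 < Metric.diam V := lt_of_le_of_ne hDnn (Ne.symm hD0)
    by_cases hSh : ∃ v ∈ V, R t - h < dist v (c t)
    · -- there is a shallow member; all shallow members coincide
      obtain ⟨P, hPmem, hPsh⟩ := hSh
      -- sub-lemma: structure of a shallow robot
      have sub : ∀ w : Fin n, w ∈ A → R t - h < dist (x (t+1) w) (c t) →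
          Metric.diam (x t '' {k | dist (x t k) (x t w) ≤ 1}) < 1/4 ∧
          dist (x (t+1) w) (x t w) ≤ Metric.diam (x t '' {k | dist (x t k) (x t w) ≤ 1}) := by
        intro w _hw hwd
        obtain ⟨aw, bw, hsegw, habw, hmidw⟩ := hmove t w
        have himgB : x t '' {k | dist (x t k) (x t w) ≤ 1} ⊆ Metric.closedBall (c t) (R t) := by
          rintro - ⟨k, -, rfl⟩
          exact hball t k
        have hawB : dist aw (c t) ≤ R t :=
          Metric.mem_closedBall.mp (hull_subset_closedBall himgB (hsegw (left_mem_segment ℝ aw bw)))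
        have hbwB : dist bw (c t) ≤ R t :=
          Metric.mem_closedBall.mp (hull_subset_closedBall himgB (hsegw (right_mem_segment ℝ aw bw)))
        have hmw : R t - h < dist (midpoint ℝ aw bw) (c t) := by
          rw [← hmidw]
          exact hwd
        have hcw := chord_sq hawB hbwB hhpos.le hhR hmw
        rw [habw] at hcw
        have hDwnn : 0 ≤ Metric.diam (x t '' {k | dist (x t k) (x t w) ≤ 1}) :=
          Metric.diam_nonneg
        have hDw14 : Metric.diam (x t '' {k | dist (x t k) (x t w) ≤ 1}) < 1/4 := by
          rw [mul_pow] at hcw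
          have hD2 : Metric.diam (x t '' {k | dist (x t k) (x t w) ≤ 1}) ^ 2 < 1/16 := by
            have e1 : lam ^ 2 * Metric.diam (x t '' {k | dist (x t k) (x t w) ≤ 1}) ^ 2 <
                lam ^ 2 * (1/16) := by
              calc lam ^ 2 * Metric.diam (x t '' {k | dist (x t k) (x t w) ≤ 1}) ^ 2
                  < 8 * R t * h := hcw
                _ = lam ^ 2 / 16 := h8Rh
                _ = lam ^ 2 * (1/16) := by ring
            exact (mul_lt_mul_iff_right₀ hlam2).mp e1
          nlinarith only [hD2, hDwnn, mul_self_nonneg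
            (Metric.diam (x t '' {k | dist (x t k) (x t w) ≤ 1}) - 1/4)]
        refine ⟨hDw14, ?_⟩
        have hselfw : x t w ∈ x t '' {k | dist (x t k) (x t w) ≤ 1} :=
          ⟨w, by simp, rfl⟩
        have hfinw : (x t '' {k | dist (x t k) (x t w) ≤ 1}).Finite :=
          Set.Finite.image _ (Set.toFinite _)
        have hballw : x t '' {k | dist (x t k) (x t w) ≤ 1} ⊆
            Metric.closedBall (x t w) (Metric.diam (x t '' {k | dist (x t k) (x t w) ≤ 1})) := by
          intro p hp
          exact Metric.mem_closedBall.mpr (Metric.dist_le_diam_of_mem hfinw.isBounded hp hselfw)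
        have := hull_subset_closedBall hballw (hsegw (midpoint_mem_segment aw bw))
        rw [← hmidw] at this
        exact Metric.mem_closedBall.mp this
      -- the claim: any shallow member equals P
      have claim : ∀ v ∈ V, R t - h < dist v (c t) → v = P := by
        rintro - ⟨w, hwA, rfl⟩ hvdist
        obtain ⟨w', hw'A, hw'eq⟩ := hPmem
        obtain ⟨hDw, hmw⟩ := sub w hwA hvdist
        obtain ⟨hDw', hmw'⟩ := sub w' hw'A (by rw [hw'eq]; exact hPsh)
        have hd1 : dist (x (t+1) w) (x (t+1) w') ≤ Metric.diam V :=
          Metric.dist_le_diam_of_mem hVfin.isBounded ⟨w, hwA, rfl⟩ ⟨w', hw'A, rfl⟩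
        have hdt : dist (x t w) (x t w') < 3/4 := by
          have h4 := dist_triangle4 (x t w) (x (t+1) w) (x (t+1) w') (x t w')
          have e1 : dist (x t w) (x (t+1) w) = dist (x (t+1) w) (x t w) := dist_comm _ _
          have e2 : dist (x (t+1) w') (x t w') = dist (x (t+1) w') (x t w') := rfl
          linarith only [hmw, hmw', hD14, hd1, h4, hDw, hDw',
            dist_comm (x t w) (x (t+1) w)]
        have hNeq : {k | dist (x t k) (x t w) ≤ 1} = {k | dist (x t k) (x t w') ≤ 1} := by
          ext k
          simp only [Set.mem_setOf_eq]
          constructor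
          · intro hk
            have hfinw : (x t '' {k' | dist (x t k') (x t w) ≤ 1}).Finite :=
              Set.Finite.image _ (Set.toFinite _)
            have h1 : dist (x t k) (x t w) ≤ Metric.diam (x t '' {k' | dist (x t k') (x t w) ≤ 1}) :=
              Metric.dist_le_diam_of_mem hfinw.isBounded ⟨k, hk, rfl⟩ ⟨w, by simp, rfl⟩
            have h2 := dist_triangle (x t k) (x t w) (x t w')
            linarith only [h1, h2, hdt, hDw]
          · intro hk
            have hfinw' : (x t '' {k' | dist (x t k') (x t w') ≤ 1}).Finite :=
              Set.Finite.image _ (Set.toFinite _)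
            have h1 : dist (x t k) (x t w') ≤
                Metric.diam (x t '' {k' | dist (x t k') (x t w') ≤ 1}) :=
              Metric.dist_le_diam_of_mem hfinw'.isBounded ⟨k, hk, rfl⟩ ⟨w', by simp, rfl⟩
            have h2 := dist_triangle (x t k) (x t w') (x t w)
            have h3 : dist (x t w') (x t w) = dist (x t w) (x t w') := dist_comm _ _
            linarith only [h1, h2, h3, hdt, hDw']
        have := hcollapse t w w' hNeq (by linarith)
        rw [hw'eq] at this
        exact this
      -- structure of V: the deep part
      have hdeep : ∀ v ∈ V, v ≠ P → dist v (c t) ≤ R t - h := by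
        intro v hv hne
        by_contra hgt
        push_neg at hgt
        exact hne (claim v hv hgt)
      have hexq : ∃ q ∈ V, q ≠ P := by
        by_contra hq
        push_neg at hq
        exact hD0 (Metric.diam_subsingleton (fun p hp q' hq' => (hq p hp).trans (hq q' hq').symm))
      obtain ⟨q0, hq0V, hq0ne⟩ := hexq
      set Deep : Set (EuclideanSpace ℝ (Fin d)) := V \ {P} with hDeepdef
      have hDeepne : Deep.Nonempty := ⟨q0, hq0V, by simpa using hq0ne⟩
      have hVsub : V ⊆ insert P Deep := by
        intro v hv
        by_cases hvP : v = P
        · exact hvP ▸ Set.mem_insert _ _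
        · exact Set.mem_insert_of_mem _ ⟨hv, by simpa using hvP⟩
      have hDeepBall1 : Deep ⊆ Metric.closedBall (c t) (R t - h) := by
        rintro v ⟨hv, hvP⟩
        exact Metric.mem_closedBall.mpr (hdeep v hv (by simpa using hvP))
      have hDeepBall2 : Deep ⊆ Metric.closedBall P (Metric.diam V) := by
        rintro v ⟨hv, -⟩
        exact Metric.mem_closedBall.mpr (Metric.dist_le_diam_of_mem hVfin.isBounded hv hPmem)
      have hPB : dist P (c t) ≤ R t := Metric.mem_closedBall.mp (hVB hPmem)
      -- decompose a and b along segments from P into the deep hull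
      have hhull2 : convexHull ℝ V ⊆ convexJoin ℝ {P} (convexHull ℝ Deep) := by
        rw [← convexHull_insert hDeepne]
        exact convexHull_mono hVsub
      obtain ⟨p1, hp1, qa, hqa, haseg⟩ := mem_convexJoin.mp (hhull2 haH)
      obtain ⟨p2, hp2, qb, hqb, hbseg⟩ := mem_convexJoin.mp (hhull2 hbH)
      rw [Set.mem_singleton_iff] at hp1 hp2
      rw [hp1] at haseg
      rw [hp2] at hbseg
      obtain ⟨ua, va, hua, hva, huva, haeq⟩ := haseg
      obtain ⟨ub, vb, hub, hvb, huvb, hbeq⟩ := hbseg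
      have hva1 : va ≤ 1 := by linarith
      have hvb1 : vb ≤ 1 := by linarith
      have hua' : ua = 1 - va := by linarith
      have hub' : ub = 1 - vb := by linarith
      rw [hua'] at haeq
      rw [hub'] at hbeq
      have hqaP : dist qa P ≤ Metric.diam V :=
        Metric.mem_closedBall.mp (hull_subset_closedBall hDeepBall2 hqa)
      have hqbP : dist qb P ≤ Metric.diam V :=
        Metric.mem_closedBall.mp (hull_subset_closedBall hDeepBall2 hqb)
      have hqaC : dist qa (c t) ≤ R t - h :=
        Metric.mem_closedBall.mp (hull_subset_closedBall hDeepBall1 hqa)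
      have hqbC : dist qb (c t) ≤ R t - h :=
        Metric.mem_closedBall.mp (hull_subset_closedBall hDeepBall1 hqb)
      -- dist a P ≤ va * D, dist b P ≤ vb * D
      have haP : dist a P ≤ va * Metric.diam V := by
        have e : a - P = va • (qa - P) := by
          rw [← haeq]
          module
        rw [dist_eq_norm, e, norm_smul, Real.norm_of_nonneg hva]
        refine mul_le_mul_of_nonneg_left ?_ hva
        rw [← dist_eq_norm]
        exact hqaP
      have hbP : dist b P ≤ vb * Metric.diam V := by
        have e : b - P = vb • (qb - P) := by
          rw [← hbeq]
          module
        rw [dist_eq_norm, e, norm_smul, Real.norm_of_nonneg hvb]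
        refine mul_le_mul_of_nonneg_left ?_ hvb
        rw [← dist_eq_norm]
        exact hqbP
      -- va + vb ≥ lam
      have hsumv : lam ≤ va + vb := by
        have h2 : dist a b ≤ dist a P + dist P b := dist_triangle a P b
        have h3 : dist P b = dist b P := dist_comm _ _
        have h4 : lam * Metric.diam V ≤ (va + vb) * Metric.diam V := by
          rw [← hab]
          nlinarith only [haP, hbP, h2, h3]
        exact le_of_mul_le_mul_right h4 hDpos
      -- depth of a and b from the center
      have haC : dist a (c t) ≤ R t - va * h := by
        have e : a - c t = (1 - va) • (P - c t) + va • (qa - c t) := by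
          rw [← haeq]
          module
        rw [dist_eq_norm, e]
        calc ‖(1 - va) • (P - c t) + va • (qa - c t)‖
            ≤ ‖(1 - va) • (P - c t)‖ + ‖va • (qa - c t)‖ := norm_add_le _ _
          _ = (1 - va) * ‖P - c t‖ + va * ‖qa - c t‖ := by
              rw [norm_smul, norm_smul, Real.norm_of_nonneg (by linarith : (0:ℝ) ≤ 1 - va),
                Real.norm_of_nonneg hva]
          _ ≤ (1 - va) * R t + va * (R t - h) := by
              have e1 : ‖P - c t‖ = dist P (c t) := (dist_eq_norm _ _).symm
              have e2 : ‖qa - c t‖ = dist qa (c t) := (dist_eq_norm _ _).symm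
              rw [e1, e2]
              refine add_le_add (mul_le_mul_of_nonneg_left hPB (by linarith))
                (mul_le_mul_of_nonneg_left hqaC hva)
          _ = R t - va * h := by ring
      have hbC : dist b (c t) ≤ R t - vb * h := by
        have e : b - c t = (1 - vb) • (P - c t) + vb • (qb - c t) := by
          rw [← hbeq]
          module
        rw [dist_eq_norm, e]
        calc ‖(1 - vb) • (P - c t) + vb • (qb - c t)‖
            ≤ ‖(1 - vb) • (P - c t)‖ + ‖vb • (qb - c t)‖ := norm_add_le _ _
          _ = (1 - vb) * ‖P - c t‖ + vb * ‖qb - c t‖ := by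
              rw [norm_smul, norm_smul, Real.norm_of_nonneg (by linarith : (0:ℝ) ≤ 1 - vb),
                Real.norm_of_nonneg hvb]
          _ ≤ (1 - vb) * R t + vb * (R t - h) := by
              have e1 : ‖P - c t‖ = dist P (c t) := (dist_eq_norm _ _).symm
              have e2 : ‖qb - c t‖ = dist qb (c t) := (dist_eq_norm _ _).symm
              rw [e1, e2]
              refine add_le_add (mul_le_mul_of_nonneg_left hPB (by linarith))
                (mul_le_mul_of_nonneg_left hqbC hvb)
          _ = R t - vb * h := by ring
      -- midpoint depth
      have hmidle : dist (x (t+2) i) (c t) ≤ (dist a (c t) + dist b (c t)) / 2 := by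
        rw [hmid']
        have := dist_midpoint_midpoint_le a b (c t) (c t)
        rwa [midpoint_self] at this
      have hx : lam * h ≤ va * h + vb * h := by
        nlinarith only [mul_le_mul_of_nonneg_right hsumv hhpos.le]
      -- contradiction: R - δ < dist ≤ R - lam*h/2 while 2δ < lam*h
      linarith only [hi, hmidle, haC, hbC, hx, hδh]
    · -- no shallow member at all: everything is h-deep, contradiction
      push_neg at hSh
      have hIn : dist (x (t+2) i) (c t) ≤ R t - h := by
        rw [hmid']
        have hVball : V ⊆ Metric.closedBall (c t) (R t - h) := fun v hv =>
          Metric.mem_closedBall.mpr (hSh v hv)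
        exact Metric.mem_closedBall.mp
          (hull_subset_closedBall hVball (hseg (midpoint_mem_segment a b)))
      have hlamh : lam * h ≤ h := by
        nlinarith only [mul_le_mul_of_nonneg_right hlam1 hhpos.le]
      linarith only [hi, hIn, hlamh, hδh, hδpos]
end
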